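/- arXiv:1701.01059 — 5 statements merged into one kernel-verified Lean document; each statement's English description precedes it below -/
import Mathlib

section
/- Let q be a prime power, m ≥ 1, and let w_0, …, w_{m−1} ∈ ℕ be positive weights. Let ω be a natural number with ω ≤ (q−1)(w_0 + ⋯ + w_{m−1}). Then the dimension of WRMC_ω(m,q) as an F_q-vector space equals the number of tuples (e_0, …, e_{m−1}) with 0 ≤ e_i ≤ q−1 for all i and Σ_{i=0}^{m−1} w_i e_i ≤ ω. -/
open MvPolynomial

/-- The weighted degree: total degree of `F(Y_0^{w_0}, …, Y_{m-1}^{w_{m-1}})`. -/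
noncomputable def wdeg {F : Type*} [CommSemiring F] {m : ℕ} (w : Fin m → ℕ)
    (f : MvPolynomial (Fin m) F) : ℕ :=
  ((MvPolynomial.bind₁ (fun l : Fin m => (MvPolynomial.X l : MvPolynomial (Fin m) F) ^ (w l))) f).totalDegree

/-- The weighted Reed–Muller code `WRMC_ω(m,q)` as a subspace of `F^{q^m}`. -/
noncomputable def WRMC (F : Type*) [CommSemiring F] [Fintype F] (m : ℕ) (w : Fin m → ℕ) (ω : ℕ) :
    Submodule F ((Fin m → F) → F) :=
  Submodule.span F
    {v | ∃ f : MvPolynomial (Fin m) F, wdeg w f ≤ ω ∧ v = fun P => MvPolynomial.eval P f}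

/-- The generalized Reed–Muller code `C_ω(m,q)`. -/
noncomputable def GRM (F : Type*) [CommSemiring F] [Fintype F] (m ω : ℕ) :
    Submodule F ((Fin m → F) → F) :=
  Submodule.span F
    {v | ∃ f : MvPolynomial (Fin m) F, f.totalDegree ≤ ω ∧ v = fun P => MvPolynomial.eval P f}

/-- The homogeneous Reed–Muller code `HRMC_d(m,q)`. -/
noncomputable def HRMC (F : Type*) [CommSemiring F] [Fintype F] (m d : ℕ) :
    Submodule F ((Fin m → F) → F) :=
  Submodule.span F
    {v | ∃ f : MvPolynomial (Fin m) F, f.IsHomogeneous d ∧ v = fun P => MvPolynomial.eval P f}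

/-- The ideal `(X_0^p - 1, …, X_{m-1}^p - 1)`. -/
noncomputable def Aideal (p m : ℕ) : Ideal (MvPolynomial (Fin m) (ZMod p)) :=
  Ideal.span (Set.range fun l : Fin m => (MvPolynomial.X l : MvPolynomial (Fin m) (ZMod p)) ^ p - 1)

/-- The modular algebra `A = F_p[X_0,…,X_{m-1}]/(X_0^p-1,…,X_{m-1}^p-1)`. -/
abbrev ModA (p m : ℕ) : Type := MvPolynomial (Fin m) (ZMod p) ⧸ Aideal p m

/-- `x_l`, the image of `X_l` in `A`. -/
noncomputable def xA (p m : ℕ) (l : Fin m) : ModA p m :=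
  Ideal.Quotient.mk (Aideal p m) (MvPolynomial.X l)

/-- The identification `ψ : F_p^{p^m} → A` sending `(c_j)` to `Σ_j c_j x_0^{j_0} ⋯ x_{m-1}^{j_{m-1}}`. -/
noncomputable def psi (p m : ℕ) [NeZero p] : ((Fin m → ZMod p) → ZMod p) →ₗ[ZMod p] ModA p m where
  toFun c := ∑ j : Fin m → ZMod p, c j • ∏ l, (xA p m l) ^ (j l).val
  map_add' a b := by simp [add_smul, Finset.sum_add_distrib]
  map_smul' r a := by simp [Finset.smul_sum, smul_smul]

/-- `b(η) = ∏_{l ∈ η} (x_l - 1)` in the binary algebra `A`. -/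
noncomputable def bElt (m : ℕ) (η : Finset (Fin m)) : ModA 2 m :=
  ∏ l ∈ η, (xA 2 m l - 1)


section AuxWRMC

open Finsupp

/-- Exponent reduction modulo `x^q = x`. -/
def redExp (q d : ℕ) : ℕ := if d = 0 then 0 else (d - 1) % (q - 1) + 1

lemma redExp_le_self (q d : ℕ) : redExp q d ≤ d := by
  unfold redExp; split
  · omega
  · have := Nat.mod_le (d - 1) (q - 1); omega

lemma redExp_lt {q : ℕ} (hq : 2 ≤ q) (d : ℕ) : redExp q d < q := by
  unfold redExp; split
  · omega
  · have : (d - 1) % (q - 1) < q - 1 := Nat.mod_lt _ (by omega)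
    omega

lemma pow_redExp {F : Type*} [Field F] [Fintype F] (a : F) (d : ℕ) :
    a ^ d = a ^ redExp (Fintype.card F) d := by
  set q := Fintype.card F with hq
  have hq2 : 2 ≤ q := Fintype.one_lt_card
  rcases eq_or_ne d 0 with rfl | hd
  · simp [redExp]
  · have hr : redExp q d = (d - 1) % (q - 1) + 1 := if_neg hd
    have hdecomp : d = (q - 1) * ((d - 1) / (q - 1)) + redExp q d := by
      rw [hr]
      have := Nat.div_add_mod (d - 1) (q - 1)
      omega
    rcases eq_or_ne a 0 with rfl | ha
    · rw [zero_pow hd, zero_pow (by rw [hr]; omega)]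
    · conv_lhs => rw [hdecomp]
      rw [pow_add, pow_mul, FiniteField.pow_card_sub_one_eq_one a ha, one_pow, one_mul]

/-- Multiply an exponent vector by the weights. -/
noncomputable def wmulF {m : ℕ} (w : Fin m → ℕ) (d : Fin m →₀ ℕ) : Fin m →₀ ℕ :=
  Finsupp.equivFunOnFinite.symm fun i => w i * d i

@[simp] lemma wmulF_apply {m : ℕ} (w : Fin m → ℕ) (d : Fin m →₀ ℕ) (i : Fin m) :
    wmulF w d i = w i * d i := rfl

lemma wmulF_injective {m : ℕ} {w : Fin m → ℕ} (hw : ∀ i, 0 < w i) :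
    Function.Injective (wmulF w) := by
  intro a b h
  ext i
  have h2 : wmulF w a i = wmulF w b i := by rw [h]
  simp only [wmulF_apply] at h2
  exact Nat.eq_of_mul_eq_mul_left (hw i) h2

lemma monomial_eq_prod {m : ℕ} {F : Type*} [CommSemiring F] (v : Fin m → ℕ) (a : F) :
    (MvPolynomial.monomial (Finsupp.equivFunOnFinite.symm v) a : MvPolynomial (Fin m) F)
      = MvPolynomial.C a * ∏ i, MvPolynomial.X i ^ v i := by
  rw [MvPolynomial.monomial_eq]
  congr 1
  rw [Finsupp.prod_fintype]
  · rfl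
  · intro i; exact pow_zero _

lemma bind₁_monomial_pow {m : ℕ} {F : Type*} [CommSemiring F] (w : Fin m → ℕ)
    (d : Fin m →₀ ℕ) (a : F) :
    MvPolynomial.bind₁ (fun l : Fin m => (MvPolynomial.X l : MvPolynomial (Fin m) F) ^ w l)
        (MvPolynomial.monomial d a)
      = MvPolynomial.monomial (wmulF w d) a := by
  rw [MvPolynomial.bind₁_monomial]
  have h : ∏ i ∈ d.support, ((MvPolynomial.X i : MvPolynomial (Fin m) F) ^ w i) ^ d i
      = ∏ i, (MvPolynomial.X i : MvPolynomial (Fin m) F) ^ (w i * d i) := by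
    rw [← Finset.prod_subset (Finset.subset_univ d.support)]
    · exact Finset.prod_congr rfl fun i _ => by rw [← pow_mul]
    · intro i _ hi
      rw [Finsupp.notMem_support_iff.mp hi, mul_zero, pow_zero]
  rw [h, wmulF, monomial_eq_prod]

lemma bind₁_pow_eq {m : ℕ} {F : Type*} [CommSemiring F] (w : Fin m → ℕ)
    (f : MvPolynomial (Fin m) F) :
    MvPolynomial.bind₁ (fun l : Fin m => (MvPolynomial.X l : MvPolynomial (Fin m) F) ^ w l) f
      = ∑ d ∈ f.support, MvPolynomial.monomial (wmulF w d) (MvPolynomial.coeff d f) := by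
  conv_lhs => rw [f.as_sum]
  rw [map_sum]
  exact Finset.sum_congr rfl fun d _ => bind₁_monomial_pow w d _

lemma le_wdeg {m : ℕ} {F : Type*} [CommSemiring F] {w : Fin m → ℕ} (hw : ∀ i, 0 < w i)
    {f : MvPolynomial (Fin m) F} {d : Fin m →₀ ℕ} (hd : d ∈ f.support) :
    ∑ i, w i * d i ≤ wdeg w f := by
  have hc : MvPolynomial.coeff (wmulF w d)
      (MvPolynomial.bind₁ (fun l : Fin m => (MvPolynomial.X l : MvPolynomial (Fin m) F) ^ w l) f)
      = MvPolynomial.coeff d f := by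
    rw [bind₁_pow_eq, MvPolynomial.coeff_sum, Finset.sum_eq_single d]
    · rw [MvPolynomial.coeff_monomial, if_pos rfl]
    · intro b _ hb
      rw [MvPolynomial.coeff_monomial, if_neg (fun h => hb (wmulF_injective hw h))]
    · intro h; exact absurd hd h
  have hmem : wmulF w d ∈ (MvPolynomial.bind₁
      (fun l : Fin m => (MvPolynomial.X l : MvPolynomial (Fin m) F) ^ w l) f).support := by
    rw [MvPolynomial.mem_support_iff, hc]
    exact MvPolynomial.mem_support_iff.mp hd
  calc ∑ i, w i * d i = (wmulF w d).sum fun _ e => e := by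
        rw [Finsupp.sum_fintype]
        · rfl
        · intro; rfl
    _ ≤ _ := MvPolynomial.le_totalDegree hmem

lemma wdeg_monomial {m : ℕ} {F : Type*} [CommSemiring F] (w : Fin m → ℕ)
    (d : Fin m →₀ ℕ) (a : F) (ha : a ≠ 0) :
    wdeg w (MvPolynomial.monomial d a) = ∑ i, w i * d i := by
  unfold wdeg
  rw [bind₁_monomial_pow, MvPolynomial.totalDegree_monomial _ ha, Finsupp.sum_fintype]
  · rfl
  · intro; rfl

lemma eq_zero_of_eval_eq_zero' {F : Type*} [Field F] [Fintype F] {m : ℕ}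
    (p : MvPolynomial (Fin m) F) (h : ∀ v : Fin m → F, MvPolynomial.eval v p = 0)
    (hdeg : ∀ s ∈ p.support, ∀ i, s i ≤ Fintype.card F - 1) : p = 0 := by
  classical
  have hinj : Function.Injective (ULift.up.{_,0} : Fin m → ULift (Fin m)) :=
    fun a b hab => congrArg ULift.down hab
  set p' := MvPolynomial.rename (ULift.up : Fin m → ULift (Fin m)) p with hp'
  have h1 : ∀ v : ULift (Fin m) → F, MvPolynomial.eval v p' = 0 := fun v => by
    rw [hp', MvPolynomial.eval_rename]; exact h _
  have h2 : p' ∈ MvPolynomial.restrictDegree (ULift (Fin m)) F (Fintype.card F - 1) := by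
    rw [MvPolynomial.mem_restrictDegree]
    intro s hs i
    rw [hp', MvPolynomial.support_rename_of_injective hinj] at hs
    obtain ⟨d, hd, rfl⟩ := Finset.mem_image.mp hs
    have : Finsupp.mapDomain ULift.up d (ULift.up i.down) = d i.down :=
      Finsupp.mapDomain_apply hinj d i.down
    simpa using this.trans_le (hdeg d hd i.down)
  have hp0 : p' = 0 := MvPolynomial.eq_zero_of_eval_eq_zero (ULift (Fin m)) F p' h1 h2
  exact MvPolynomial.rename_injective _ hinj (by rw [← hp', hp0, map_zero])

lemma monEval_linearIndependent (F : Type*) [Field F] [Fintype F] (m : ℕ) :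
    LinearIndependent F (fun e : Fin m → Fin (Fintype.card F) =>
      fun P : Fin m → F => ∏ i, P i ^ (e i : ℕ)) := by
  classical
  rw [Fintype.linearIndependent_iff]
  intro g hg e
  have hFeInj : Function.Injective
      (fun e : Fin m → Fin (Fintype.card F) =>
        Finsupp.equivFunOnFinite.symm fun i => ((e i : ℕ))) := by
    intro a b h
    have h3 : (fun i => ((a i : ℕ))) = fun i => ((b i : ℕ)) :=
      Finsupp.equivFunOnFinite.symm.injective h
    funext i
    exact Fin.val_injective (congrFun h3 i)
  set p : MvPolynomial (Fin m) F :=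
    ∑ e : Fin m → Fin (Fintype.card F),
      MvPolynomial.monomial (Finsupp.equivFunOnFinite.symm fun i => ((e i : ℕ))) (g e) with hp
  have heval : ∀ v : Fin m → F, MvPolynomial.eval v p = 0 := by
    intro v
    have h0 := congrFun hg v
    simp only [Finset.sum_apply, Pi.smul_apply, smul_eq_mul, Pi.zero_apply] at h0
    calc MvPolynomial.eval v p
        = ∑ e : Fin m → Fin (Fintype.card F), g e * ∏ i, v i ^ (e i : ℕ) := by
          rw [hp, map_sum]
          refine Finset.sum_congr rfl fun e _ => ?_
          rw [MvPolynomial.eval_monomial]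
          congr 1
          rw [Finsupp.prod_fintype]
          · rfl
          · intro; exact pow_zero _
      _ = 0 := h0
  have hmem : ∀ s ∈ p.support, ∀ i, s i ≤ Fintype.card F - 1 := by
    intro s hs i
    obtain ⟨e, _, hse⟩ := Finset.mem_biUnion.mp (MvPolynomial.support_sum hs)
    have hss := MvPolynomial.support_monomial_subset hse
    rw [Finset.mem_singleton] at hss
    subst hss
    have hlt : (e i : ℕ) < Fintype.card F := (e i).isLt
    have hEq : (Finsupp.equivFunOnFinite.symm fun i => ((e i : ℕ))) i = (e i : ℕ) := rfl
    omega
  have hp0 : p = 0 := eq_zero_of_eval_eq_zero' p heval hmem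
  have hcoeff : MvPolynomial.coeff
      (Finsupp.equivFunOnFinite.symm fun i => ((e i : ℕ))) p = g e := by
    rw [hp, MvPolynomial.coeff_sum, Finset.sum_eq_single e]
    · rw [MvPolynomial.coeff_monomial, if_pos rfl]
    · intro b _ hb
      rw [MvPolynomial.coeff_monomial, if_neg (fun h => hb (hFeInj h))]
    · intro h; exact absurd (Finset.mem_univ e) h
  rw [hp0] at hcoeff
  simpa using hcoeff.symm

end AuxWRMC

/-- the dimension of the weighted Reed–Muller code `WRMC_ω(m,q)` equals the
number of exponent tuples `(e_0,…,e_{m-1})` with `0 ≤ e_i ≤ q-1` and `Σ w_i e_i ≤ ω`. -/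
theorem wrmc_dimension (q m : ℕ) (F : Type*) [Field F] [Fintype F]
    (hq : Fintype.card F = q) (hm : 1 ≤ m)
    (w : Fin m → ℕ) (hw : ∀ i, 0 < w i)
    (ω : ℕ) (hω : ω ≤ (q - 1) * ∑ i, w i) :
    Module.finrank F (WRMC F m w ω) =
      (Finset.univ.filter fun e : Fin m → Fin q => ∑ i, w i * (e i : ℕ) ≤ ω).card := by
  classical
  subst hq
  set q := Fintype.card F with hqdef
  have hq2 : 2 ≤ q := Fintype.one_lt_card
  set B : (Fin m → Fin q) → ((Fin m → F) → F) := fun e P => ∏ i, P i ^ (e i : ℕ) with hB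
  set T := Finset.univ.filter fun e : Fin m → Fin q => ∑ i, w i * (e i : ℕ) ≤ ω with hT
  have hspan : WRMC F m w ω = Submodule.span F (B '' ↑T) := by
    apply le_antisymm
    · rw [WRMC, Submodule.span_le]
      rintro v ⟨f, hf, rfl⟩
      have hrw : (fun P : Fin m → F => MvPolynomial.eval P f)
          = ∑ d ∈ f.support, MvPolynomial.coeff d f •
              B (fun i => ⟨redExp q (d i), redExp_lt hq2 _⟩) := by
        funext P
        rw [MvPolynomial.eval_eq']
        simp only [Finset.sum_apply, Pi.smul_apply, smul_eq_mul, hB]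
        refine Finset.sum_congr rfl fun d _ => ?_
        congr 1
        exact Finset.prod_congr rfl fun i _ => pow_redExp (P i) (d i)
      rw [hrw]
      refine Submodule.sum_mem _ fun d hd => Submodule.smul_mem _ _ (Submodule.subset_span ?_)
      refine ⟨_, ?_, rfl⟩
      rw [Finset.mem_coe, hT, Finset.mem_filter]
      refine ⟨Finset.mem_univ _, ?_⟩
      calc ∑ i, w i * redExp q (d i) ≤ ∑ i, w i * d i :=
            Finset.sum_le_sum fun i _ => Nat.mul_le_mul_left _ (redExp_le_self q (d i))
        _ ≤ wdeg w f := le_wdeg hw hd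
        _ ≤ ω := hf
    · rw [Submodule.span_le]
      rintro v ⟨e, he, rfl⟩
      apply Submodule.subset_span
      rw [Finset.mem_coe, hT, Finset.mem_filter] at he
      refine ⟨MvPolynomial.monomial (Finsupp.equivFunOnFinite.symm fun i => (e i : ℕ)) 1, ?_, ?_⟩
      · rw [wdeg_monomial _ _ _ one_ne_zero]
        exact he.2
      · funext P
        rw [MvPolynomial.eval_monomial, one_mul, Finsupp.prod_fintype]
        · rfl
        · intro; exact pow_zero _
  rw [hspan]
  have hBT : B '' ↑T = Set.range (fun e : ↥T => B ↑e) := Set.image_eq_range B ↑T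
  have hLI : LinearIndependent F (fun e : ↥T => B ↑e) :=
    (monEval_linearIndependent F m).comp (Subtype.val : ↥T → _) Subtype.val_injective
  rw [hBT, finrank_span_eq_card hLI, Fintype.card_coe]
end

section
/- Let p be a prime and m ≥ 1. For every tuple i = (i_0, …, i_{m−1}) ∈ {0, …, p−1}^m, the following identity holds in A: (x_0 − 1)^{i_0} ⋯ (x_{m−1} − 1)^{i_{m−1}} = Σ_{j} H_i(j_0, …, j_{m−1}) · x_0^{j_0} ⋯ x_{m−1}^{j_{m−1}}, where the sum runs over all tuples j = (j_0, …, j_{m−1}) ∈ {0, …, p−1}^m with j_l ≤ i_l for every l. -/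
open MvPolynomial

/-- The univariate polynomial `H_i(Y) = α_i ∏_{j=1}^{p-1-i} (Y + j)` with `α_i = -(i!)`,
evaluated at `y ∈ F_p`. -/
def Hone (p : ℕ) (i : ℕ) (y : ZMod p) : ZMod p :=
  (-(Nat.factorial i : ZMod p)) * ∏ j ∈ Finset.Icc 1 (p - 1 - i), (y + (j : ZMod p))

/-- `H_i(j) = ∏_l H_{i_l}(j_l)` for tuples `i, j ∈ {0,…,p-1}^m`. -/
def Hmulti (p m : ℕ) (i j : Fin m → Fin p) : ZMod p :=
  ∏ l, Hone p (i l : ℕ) (((j l : ℕ) : ZMod p))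


lemma wilson_aux (p : ℕ) (hp : p.Prime) (r : ℕ) (hr : r ≤ p - 1) :
    ((p - 1 - r).factorial : ZMod p) * r.factorial = (-1) ^ (r + 1) := by
  haveI : Fact p.Prime := ⟨hp⟩
  induction r with
  | zero => simpa using ZMod.wilsons_lemma p
  | succ r ih =>
    have hr' : r ≤ p - 1 := by omega
    have h1 : p - 1 - r = (p - 1 - (r + 1)) + 1 := by omega
    have hcast : ((p - 1 - r : ℕ) : ZMod p) = -((r : ZMod p) + 1) := by
      have h : (p - 1 - r : ℕ) = p - (r + 1) := by omega
      rw [h]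
      have hle : r + 1 ≤ p := by omega
      push_cast [Nat.cast_sub hle]
      simp
    have hih := ih hr'
    rw [h1, Nat.factorial_succ, ← h1] at hih
    push_cast at hih ⊢
    rw [hcast] at hih
    rw [Nat.factorial_succ]
    push_cast
    have key : ((r : ZMod p) + 1) * (((p - 1 - (r+1)).factorial : ZMod p) * r.factorial) = (-1)^(r+2) := by
      calc ((r:ZMod p)+1) * (((p - 1 - (r+1)).factorial : ZMod p) * (r.factorial : ZMod p))
          = -((-((r:ZMod p)+1)) * ((p - 1 - (r+1)).factorial : ZMod p) * (r.factorial : ZMod p)) := by ring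
        _ = -((-1)^(r+1)) := by rw [← hcast] at *; rw [hih]
        _ = (-1)^(r+2) := by ring
    calc ((p - 1 - (r+1)).factorial : ZMod p) * (((r:ZMod p)+1) * (r.factorial : ZMod p))
        = ((r : ZMod p) + 1) * (((p - 1 - (r+1)).factorial : ZMod p) * r.factorial) := by ring
      _ = (-1)^(r+2) := key
      _ = (-1)^(r+1+1) := by ring_nf

lemma prod_shift_fact (j n : ℕ) : j.factorial * ∏ k ∈ Finset.Icc 1 n, (j + k) = (j + n).factorial := by
  induction n with
  | zero => simp
  | succ n ih =>
    rw [Finset.prod_Icc_succ_top (by omega), ← mul_assoc, ih, ← add_assoc, Nat.factorial_succ]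
    ring

lemma fact_ne_zmod (p : ℕ) (hp : p.Prime) (a : ℕ) (ha : a < p) : ((a.factorial : ZMod p)) ≠ 0 := by
  haveI : Fact p.Prime := ⟨hp⟩
  rw [Ne, ZMod.natCast_eq_zero_iff, hp.dvd_factorial]
  omega

lemma Hone_eq (p : ℕ) (hp : p.Prime) (i j : ℕ) (hj : j ≤ i) (hi : i ≤ p - 1) :
    Hone p i ((j : ZMod p)) = (-1)^(i-j) * (i.choose j : ZMod p) := by
  haveI : Fact p.Prime := ⟨hp⟩
  have hp1 : 1 < p := hp.one_lt
  have hjp : j < p := by omega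
  have hij : i - j < p := by omega
  apply mul_right_cancel₀ (fact_ne_zmod p hp j hjp)
  apply mul_right_cancel₀ (fact_ne_zmod p hp (i-j) hij)
  have key : Hone p i ((j : ZMod p)) * (j.factorial : ZMod p)
      = -(i.factorial : ZMod p) * ((p - 1 - (i - j)).factorial : ZMod p) := by
    unfold Hone
    have hpr : (j.factorial : ZMod p) * ∏ k ∈ Finset.Icc 1 (p-1-i), ((j : ZMod p) + (k : ZMod p))
        = ((j + (p-1-i)).factorial : ZMod p) := by
      rw [← prod_shift_fact j (p-1-i)]
      push_cast
      ring
    have h2 : j + (p - 1 - i) = p - 1 - (i - j) := by omega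
    rw [h2] at hpr
    calc -(i.factorial : ZMod p) * (∏ k ∈ Finset.Icc 1 (p-1-i), ((j : ZMod p) + (k : ZMod p))) * (j.factorial : ZMod p)
        = -(i.factorial : ZMod p) * ((j.factorial : ZMod p) * ∏ k ∈ Finset.Icc 1 (p-1-i), ((j : ZMod p) + (k : ZMod p))) := by ring
      _ = -(i.factorial : ZMod p) * ((p - 1 - (i - j)).factorial : ZMod p) := by rw [hpr]
  rw [key]
  have hw := wilson_aux p hp (i - j) (by omega)
  have hc : (i.choose j : ZMod p) * (j.factorial : ZMod p) * ((i-j).factorial : ZMod p) = (i.factorial : ZMod p) := by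
    rw [← Nat.cast_mul, ← Nat.cast_mul, Nat.choose_mul_factorial_mul_factorial hj]
  calc -(i.factorial : ZMod p) * ((p - 1 - (i - j)).factorial : ZMod p) * ((i-j).factorial : ZMod p)
      = -(i.factorial : ZMod p) * (((p - 1 - (i - j)).factorial : ZMod p) * ((i-j).factorial : ZMod p)) := by ring
    _ = -(i.factorial : ZMod p) * (-1)^(i-j+1) := by rw [hw]
    _ = (-1)^(i-j) * (i.factorial : ZMod p) := by ring
    _ = (-1)^(i-j) * ((i.choose j : ZMod p) * (j.factorial : ZMod p) * ((i-j).factorial : ZMod p)) := by rw [hc]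
    _ = (-1)^(i-j) * (i.choose j : ZMod p) * (j.factorial : ZMod p) * ((i-j).factorial : ZMod p) := by ring

lemma modA_smul_def (p m : ℕ) [NeZero p] (c : ZMod p) (x : ModA p m) :
    c • x = algebraMap (ZMod p) (ModA p m) c * x := Algebra.smul_def c x

lemma modA_prod_smul (p m : ℕ) [NeZero p] (c : Fin m → ZMod p) (g : Fin m → ModA p m) :
    ∏ l, (c l • g l) = (∏ l, c l) • ∏ l, g l := by
  rw [modA_smul_def]
  calc ∏ l, (c l • g l) = ∏ l, (algebraMap (ZMod p) (ModA p m) (c l) * g l) :=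
        Finset.prod_congr rfl fun l _ => modA_smul_def p m (c l) (g l)
    _ = algebraMap (ZMod p) (ModA p m) (∏ l, c l) * ∏ l, g l := by
        rw [Finset.prod_mul_distrib, map_prod]

lemma sub_one_pow_expand (p m : ℕ) [NeZero p] (x : ModA p m) (n : ℕ) :
    (x - 1)^n = ∑ k ∈ Finset.range (n+1),
      ((-1:ZMod p)^(n-k) * ((n.choose k : ℕ) : ZMod p)) • x^k := by
  rw [sub_eq_add_neg, add_pow]
  refine Finset.sum_congr rfl fun k hk => ?_
  rw [modA_smul_def, map_mul, map_pow, map_neg, map_one, map_natCast]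
  ring

/-- in `A`, for every tuple `i ∈ {0,…,p-1}^m`,
`(x_0-1)^{i_0} ⋯ (x_{m-1}-1)^{i_{m-1}} = Σ_{j ≤ i} H_i(j) x_0^{j_0} ⋯ x_{m-1}^{j_{m-1}}`. -/
theorem jennings_expansion (p m : ℕ) (hp : p.Prime) [NeZero p] (hm : 1 ≤ m)
    (i : Fin m → Fin p) :
    ∏ l, (xA p m l - 1) ^ ((i l : ℕ)) =
      ∑ j ∈ Finset.univ.filter (fun j : Fin m → Fin p => ∀ l, (j l : ℕ) ≤ (i l : ℕ)),
        Hmulti p m i j • ∏ l, (xA p m l) ^ ((j l : ℕ)) := by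
  haveI : Fact p.Prime := ⟨hp⟩
  have hple : ∀ a : Fin p, (a : ℕ) ≤ p - 1 := fun a => by have := a.isLt; omega
  calc ∏ l, (xA p m l - 1) ^ ((i l : ℕ))
      = ∏ l, ∑ k ∈ Finset.range ((i l : ℕ)+1),
          ((-1:ZMod p)^((i l : ℕ)-k) * (((i l : ℕ).choose k : ℕ) : ZMod p)) • (xA p m l)^k :=
        Finset.prod_congr rfl fun l _ => sub_one_pow_expand p m (xA p m l) (i l : ℕ)
    _ = ∑ d ∈ Fintype.piFinset (fun l => Finset.range ((i l : ℕ)+1)),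
          ∏ l, (((-1:ZMod p)^((i l:ℕ)-(d l)) * (((i l:ℕ).choose (d l) : ℕ) : ZMod p)) • (xA p m l)^(d l)) :=
        Finset.prod_univ_sum _ _
    _ = ∑ d ∈ Fintype.piFinset (fun l => Finset.range ((i l : ℕ)+1)),
          (∏ l, ((-1:ZMod p)^((i l:ℕ)-(d l)) * (((i l:ℕ).choose (d l) : ℕ) : ZMod p))) • ∏ l, (xA p m l)^(d l) :=
        Finset.sum_congr rfl fun d _ => modA_prod_smul p m _ _
    _ = ∑ j ∈ Finset.univ.filter (fun j : Fin m → Fin p => ∀ l, (j l : ℕ) ≤ (i l : ℕ)),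
          Hmulti p m i j • ∏ l, (xA p m l) ^ ((j l : ℕ)) := by
        open Fin.NatCast in apply Finset.sum_nbij' (fun d => fun l => ((d l : ℕ) : Fin p)) (fun j => fun l => (j l : ℕ))
        · intro d hd
          rw [Fintype.mem_piFinset] at hd
          rw [Finset.mem_filter]
          refine ⟨Finset.mem_univ _, fun l => ?_⟩
          have hdl : d l < p := by
            have := Finset.mem_range.mp (hd l); have := (i l).isLt; omega
          rw [Fin.val_cast_of_lt hdl]
          have := Finset.mem_range.mp (hd l); omega
        · intro j hj
          rw [Finset.mem_filter] at hj
          rw [Fintype.mem_piFinset]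
          intro l
          rw [Finset.mem_range]
          have := hj.2 l; omega
        · intro d hd
          rw [Fintype.mem_piFinset] at hd
          funext l
          have hdl : d l < p := by
            have := Finset.mem_range.mp (hd l); have := (i l).isLt; omega
          exact Fin.val_cast_of_lt hdl
        · intro j _
          funext l
          exact Fin.cast_val_eq_self (j l)
        · intro d hd
          rw [Fintype.mem_piFinset] at hd
          have hdl : ∀ l, d l < p := fun l => by
            have := Finset.mem_range.mp (hd l); have := (i l).isLt; omega
          have hdle : ∀ l, d l ≤ (i l : ℕ) := fun l => by
            have := Finset.mem_range.mp (hd l); omega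
          congr 1
          · unfold Hmulti
            refine Finset.prod_congr rfl fun l _ => ?_
            rw [Fin.val_cast_of_lt (hdl l), Hone_eq p hp (i l : ℕ) (d l) (hdle l) (hple (i l))]
          · refine Finset.prod_congr rfl fun l _ => ?_
            rw [Fin.val_cast_of_lt (hdl l)]
end

section
/- Let m ≥ 1 and let d be an integer with 1 ≤ d ≤ m. Then the set { (x_0 − 1)^{i_0} ⋯ (x_{m−1} − 1)^{i_{m−1}} + 1̂ : i_k ∈ {0,1} for all k, and m − d ≤ Σ_{k=0}^{m−1} i_k < m } is an F_2-linear basis of ψ(HRMC_d(m,2)), the image in A of the binary homogeneous Reed–Muller code of order d under the identification ψ. -/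
open MvPolynomial

noncomputable def Theta (m : ℕ) : MvPolynomial (Fin m) (ZMod 2) →ₐ[ZMod 2] MvPolynomial (Fin m) (ZMod 2) :=
  aeval (fun l => 1 + X l)

noncomputable def SqIdeal (m : ℕ) : Ideal (MvPolynomial (Fin m) (ZMod 2)) :=
  Ideal.span (Set.range fun l : Fin m => (X l : MvPolynomial (Fin m) (ZMod 2)) ^ 2)

lemma coeff_zero_of_mem_sq {m : ℕ} {f : MvPolynomial (Fin m) (ZMod 2)} (hf : f ∈ SqIdeal m)
    (d : Fin m →₀ ℕ) (hd : ∀ l, d l ≤ 1) : coeff d f = 0 := by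
  induction hf using Submodule.span_induction generalizing d with
  | mem x hx =>
    obtain ⟨l, rfl⟩ := hx
    show coeff d ((X l : MvPolynomial (Fin m) (ZMod 2)) ^ 2) = 0
    rw [X_pow_eq_monomial, coeff_monomial]
    have : Finsupp.single l 2 ≠ d := by
      intro h
      have h2 := hd l
      rw [← h] at h2
      simp at h2
    simp [this]
  | zero => simp
  | add x y _ _ hx hy => simp [coeff_add, hx d hd, hy d hd]
  | smul r x _ hx =>
    rw [smul_eq_mul, coeff_mul]
    apply Finset.sum_eq_zero
    rintro ⟨a, b⟩ hab
    rw [Finset.HasAntidiagonal.mem_antidiagonal] at hab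
    have hb : ∀ l, b l ≤ d l := by
      intro l
      have : a l + b l = d l := by rw [← Finsupp.add_apply, hab]
      omega
    rw [hx b (fun l => le_trans (hb l) (hd l)), mul_zero]

lemma theta_mem_sq {m : ℕ} {f : MvPolynomial (Fin m) (ZMod 2)} (hf : f ∈ Aideal 2 m) :
    Theta m f ∈ SqIdeal m := by
  have h : Aideal 2 m ≤ (SqIdeal m).comap (Theta m : MvPolynomial (Fin m) (ZMod 2) →+* MvPolynomial (Fin m) (ZMod 2)) := by
    rw [Aideal, Ideal.span_le]
    rintro _ ⟨l, rfl⟩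
    simp only [SetLike.mem_coe, Ideal.mem_comap, RingHom.coe_coe, map_sub, map_pow, map_one]
    rw [Theta, aeval_X]
    have h2 : (1 + X l : MvPolynomial (Fin m) (ZMod 2)) ^ 2 = 1 + (X l) ^ 2 := by
      rw [add_pow_char, one_pow]
    rw [h2, add_sub_cancel_left]
    exact Ideal.subset_span ⟨l, rfl⟩
  exact h hf

noncomputable def Dexp {m : ℕ} (i : Fin m → Fin 2) : Fin m →₀ ℕ :=
  Finsupp.equivFunOnFinite.symm (fun l => (i l : ℕ))

lemma Dexp_apply {m : ℕ} (i : Fin m → Fin 2) (l : Fin m) : Dexp i l = (i l : ℕ) := rfl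

lemma Dexp_injective {m : ℕ} : Function.Injective (Dexp (m := m)) := by
  intro a b hab
  funext l
  have : (a l : ℕ) = (b l : ℕ) := by rw [← Dexp_apply, ← Dexp_apply, hab]
  exact Fin.val_injective this

lemma prod_X_pow_eq {m : ℕ} (i : Fin m → Fin 2) :
    (∏ l, (X l : MvPolynomial (Fin m) (ZMod 2)) ^ (i l : ℕ)) = monomial (Dexp i) 1 := by
  rw [← prod_X_pow_eq_monomial]
  rw [Finset.prod_subset (Finset.subset_univ (Dexp i).support)]
  · exact Finset.prod_congr rfl fun l _ => by rw [Dexp_apply]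
  · intro l _ hl
    rw [Finsupp.notMem_support_iff] at hl
    rw [hl, pow_zero]

lemma sum_Dexp {m : ℕ} (i : Fin m → Fin 2) : (Dexp i).sum (fun _ e => e) = ∑ l, (i l : ℕ) := by
  rw [Finsupp.sum]
  rw [Finset.sum_subset (Finset.subset_univ (Dexp i).support)]
  · exact Finset.sum_congr rfl fun l _ => by rw [Dexp_apply]
  · intro l _ hl
    rwa [Finsupp.notMem_support_iff] at hl

lemma theta_X_sub_one {m : ℕ} (l : Fin m) :
    Theta m ((X l : MvPolynomial (Fin m) (ZMod 2)) - 1) = X l := by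
  rw [map_sub, map_one, Theta, aeval_X, add_sub_cancel_left]

lemma hrmc_indep (m d : ℕ) :
    LinearIndependent (ZMod 2)
      (fun i : {i : Fin m → Fin 2 // m - d ≤ ∑ k, (i k : ℕ) ∧ ∑ k, (i k : ℕ) < m} =>
        (∏ l, (xA 2 m l - 1) ^ ((i.1 l : ℕ))) + ∏ l, (xA 2 m l - 1)) := by
  rw [Fintype.linearIndependent_iff]
  intro g hg i0
  classical
  set Q : (Fin m → Fin 2) → MvPolynomial (Fin m) (ZMod 2) :=
    fun i => (∏ l, ((X l : MvPolynomial (Fin m) (ZMod 2)) - 1) ^ ((i l : ℕ))) + ∏ l, (X l - 1)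
    with hQ
  have hv : ∀ i : Fin m → Fin 2,
      Ideal.Quotient.mkₐ (ZMod 2) (Aideal 2 m) (Q i)
        = (∏ l, (xA 2 m l - 1) ^ ((i l : ℕ))) + ∏ l, (xA 2 m l - 1) := by
    intro i
    simp only [hQ, map_add, map_prod, map_pow, map_sub, map_one, Ideal.Quotient.mkₐ_eq_mk]
    rfl
  have hmem : (∑ i : {i : Fin m → Fin 2 // m - d ≤ ∑ k, (i k : ℕ) ∧ ∑ k, (i k : ℕ) < m},
      g i • Q i.1) ∈ Aideal 2 m := by
    rw [← Ideal.Quotient.eq_zero_iff_mem]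
    have : Ideal.Quotient.mk (Aideal 2 m) (∑ i : {i : Fin m → Fin 2 // m - d ≤ ∑ k, (i k : ℕ) ∧ ∑ k, (i k : ℕ) < m}, g i • Q i.1)
        = Ideal.Quotient.mkₐ (ZMod 2) (Aideal 2 m) (∑ i, g i • Q i.1) := rfl
    rw [this, map_sum]
    rw [← hg]
    refine Finset.sum_congr rfl fun i _ => ?_
    rw [map_smul, hv]
  have hth := theta_mem_sq hmem
  have hcoeff := coeff_zero_of_mem_sq hth (Dexp i0.1) (fun l => by
    rw [Dexp_apply]; exact Nat.lt_succ_iff.mp (i0.1 l).isLt)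
  have hTheta : Theta m (∑ i : {i : Fin m → Fin 2 // m - d ≤ ∑ k, (i k : ℕ) ∧ ∑ k, (i k : ℕ) < m}, g i • Q i.1)
      = ∑ i : {i : Fin m → Fin 2 // m - d ≤ ∑ k, (i k : ℕ) ∧ ∑ k, (i k : ℕ) < m},
          g i • (monomial (Dexp i.1) 1 + monomial (Dexp (fun _ => 1)) 1) := by
    rw [map_sum]
    refine Finset.sum_congr rfl fun i _ => ?_
    rw [map_smul, hQ]
    simp only [map_add, map_prod, map_pow, theta_X_sub_one]
    have h2 : (∏ l, (X l : MvPolynomial (Fin m) (ZMod 2))) = monomial (Dexp (fun _ => (1 : Fin 2))) 1 := by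
      rw [← prod_X_pow_eq]
      exact Finset.prod_congr rfl fun l _ => by norm_num
    rw [prod_X_pow_eq, h2]
  rw [hTheta] at hcoeff
  rw [coeff_sum] at hcoeff
  have hones : Dexp (m := m) (fun _ => 1) ≠ Dexp i0.1 := by
    intro h
    have h1 := sum_Dexp (m := m) (fun _ => 1)
    have h2 := sum_Dexp i0.1
    rw [h] at h1
    rw [h1] at h2
    simp at h2
    rw [h2] at *
    exact absurd i0.2.2 (by omega)
  have : ∀ i : {i : Fin m → Fin 2 // m - d ≤ ∑ k, (i k : ℕ) ∧ ∑ k, (i k : ℕ) < m},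
      coeff (Dexp i0.1) (g i • (monomial (Dexp i.1) 1 + monomial (Dexp (fun _ => 1)) (1 : ZMod 2)))
        = if i = i0 then g i else 0 := by
    intro i
    rw [coeff_smul, coeff_add, coeff_monomial, coeff_monomial, if_neg hones]
    by_cases h : i = i0
    · subst h
      simp
    · rw [if_neg (fun hh => h (Subtype.ext (Dexp_injective hh))), if_neg h]
      simp
  rw [Finset.sum_congr rfl (fun i _ => this i)] at hcoeff
  rwa [Finset.sum_ite_eq' Finset.univ i0 g, if_pos (Finset.mem_univ i0)] at hcoeff

lemma psi_apply {p m : ℕ} [NeZero p] (c : (Fin m → ZMod p) → ZMod p) :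
    psi p m c = ∑ j : Fin m → ZMod p, c j • ∏ l, (xA p m l) ^ (j l).val := rfl

lemma addself {m : ℕ} (z : ModA 2 m) : z + z = 0 := by
  rw [← two_smul (ZMod 2) z, show (2 : ZMod 2) = 0 by decide, zero_smul]

lemma one_add_eq_sub {m : ℕ} (z : ModA 2 m) : 1 + z = z - 1 := by
  rw [sub_eq_add_neg, add_comm]
  congr 1
  rw [neg_eq_of_add_eq_zero_left (addself 1)]

lemma odd_nsmul_self {m : ℕ} (z : ModA 2 m) {n : ℕ} (hn : Odd n) : n • z = z := by
  obtain ⟨k, rfl⟩ := hn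
  rw [add_nsmul, one_nsmul, two_mul, add_nsmul, addself, zero_add]

lemma zmod2_sum {M : Type*} [AddCommMonoid M] (g : ZMod 2 → M) :
    ∑ a : ZMod 2, g a = g 0 + g 1 := by
  rw [show (Finset.univ : Finset (ZMod 2)) = {0, 1} by decide]
  rw [Finset.sum_insert (by decide), Finset.sum_singleton]

lemma zmod2_pow (x : ZMod 2) {n : ℕ} (hn : n ≠ 0) : x ^ n = x := by
  have hx : ∀ y : ZMod 2, y = 0 ∨ y = 1 := by decide
  rcases hx x with rfl | rfl
  · rw [zero_pow hn]
  · rw [one_pow]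

lemma smul_algebraMap' {m : ℕ} (c : ZMod 2) (z : ModA 2 m) :
    c • z = algebraMap (ZMod 2) (ModA 2 m) c * z := Algebra.smul_def c z

lemma psi_prod {m : ℕ} (S : Finset (Fin m)) :
    psi 2 m (fun P => ∏ l ∈ S, P l)
      = (∏ l ∈ S, xA 2 m l) * ∏ l ∈ Sᶜ, (1 + xA 2 m l) := by
  classical
  rw [psi_apply]
  set F : Fin m → ZMod 2 → ModA 2 m :=
    fun l a => algebraMap (ZMod 2) (ModA 2 m) (if l ∈ S then a else 1) * (xA 2 m l) ^ a.val with hF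
  have hterm : ∀ j : Fin m → ZMod 2,
      (∏ l ∈ S, j l) • ∏ l, (xA 2 m l) ^ (j l).val = ∏ l, F l (j l) := by
    intro j
    rw [hF]
    rw [Finset.prod_mul_distrib, ← map_prod]
    rw [smul_algebraMap']
    congr 2
    rw [← Finset.prod_filter_mul_prod_filter_not Finset.univ (fun l => l ∈ S)]
    have h1 : Finset.univ.filter (fun l => l ∈ S) = S := by ext l; simp
    rw [h1]
    have h2 : ∀ l ∈ Finset.univ.filter (fun l => l ∉ S), (if l ∈ S then j l else 1) = 1 := by
      intro l hl
      rw [Finset.mem_filter] at hl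
      rw [if_neg hl.2]
    rw [Finset.prod_congr rfl h2, Finset.prod_const_one, mul_one]
    exact (Finset.prod_congr rfl fun l hl => (if_pos hl)).symm
  rw [Finset.sum_congr rfl fun j _ => hterm j]
  rw [← Fintype.piFinset_univ, ← Finset.prod_univ_sum]
  have hfac : ∀ l : Fin m,
      (∑ a : ZMod 2, F l a) = if l ∈ S then xA 2 m l else 1 + xA 2 m l := by
    intro l
    rw [zmod2_sum, hF]
    by_cases hl : l ∈ S
    · rw [if_pos hl]
      simp only [if_pos hl]
      simp [ZMod.val]
      exact pow_one _
    · rw [if_neg hl]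
      simp only [if_neg hl]
      simp [ZMod.val]
      exact congrArg₂ (· + ·) (pow_zero _) (pow_one _)
  rw [Finset.prod_congr rfl fun l _ => hfac l]
  rw [← Finset.prod_filter_mul_prod_filter_not Finset.univ (fun l => l ∈ S)]
  have h1 : Finset.univ.filter (fun l => l ∈ S) = S := by ext l; simp
  have h2 : Finset.univ.filter (fun l => l ∉ S) = Sᶜ := by ext l; simp
  rw [h1, h2]
  congr 1
  · exact Finset.prod_congr rfl fun l hl => if_pos hl
  · refine Finset.prod_congr rfl fun l hl => ?_
    rw [Finset.mem_compl] at hl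
    exact if_neg hl

noncomputable def yQ {m : ℕ} (U : Finset (Fin m)) : ModA 2 m := ∏ l ∈ U, (xA 2 m l - 1)

lemma psi_prod' {m : ℕ} (S : Finset (Fin m)) :
    psi 2 m (fun P => ∏ l ∈ S, P l) = ∑ T ∈ S.powerset, yQ (T ∪ Sᶜ) := by
  classical
  rw [psi_prod]
  have h1 : (∏ l ∈ S, xA 2 m l) = ∑ T ∈ S.powerset, yQ T := by
    have : ∀ l ∈ S, xA 2 m l = (xA 2 m l - 1) + 1 := by intro l _; ring
    rw [Finset.prod_congr rfl this, Finset.prod_add]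
    exact Finset.sum_congr rfl fun T _ => by rw [Finset.prod_const_one, mul_one]; rfl
  have h2 : (∏ l ∈ Sᶜ, (1 + xA 2 m l)) = yQ Sᶜ := by
    exact Finset.prod_congr rfl fun l _ => one_add_eq_sub _
  rw [h1, h2, Finset.sum_mul]
  refine Finset.sum_congr rfl fun T hT => ?_
  rw [Finset.mem_powerset] at hT
  rw [yQ, yQ, yQ, ← Finset.prod_union]
  exact Finset.disjoint_left.mpr fun a ha hc => (Finset.mem_compl.mp hc) (hT ha)

lemma psi_prod'' {m : ℕ} {S : Finset (Fin m)} (hS : S.Nonempty) :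
    psi 2 m (fun P => ∏ l ∈ S, P l)
      = ∑ T ∈ S.powerset.erase S, (yQ (T ∪ Sᶜ) + yQ Finset.univ) := by
  classical
  rw [psi_prod']
  rw [← Finset.add_sum_erase _ _ (Finset.mem_powerset_self S)]
  rw [Finset.union_compl, Finset.sum_add_distrib, Finset.sum_const, add_comm]
  congr 1
  rw [Finset.card_erase_of_mem (Finset.mem_powerset_self S), Finset.card_powerset]
  refine (odd_nsmul_self _ ?_).symm
  refine Nat.Even.sub_odd Nat.one_le_two_pow ?_ odd_one
  rw [Nat.even_pow]
  exact ⟨even_two, Finset.card_ne_zero.mpr hS⟩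

noncomputable def Efun (m : ℕ) : MvPolynomial (Fin m) (ZMod 2) →ₗ[ZMod 2] ModA 2 m where
  toFun f := psi 2 m (fun P => eval P f)
  map_add' f g := by
    have h : (fun P : Fin m → ZMod 2 => eval P (f + g))
        = (fun P => eval P f) + (fun P => eval P g) := funext fun P => map_add (eval P) f g
    show psi 2 m _ = psi 2 m _ + psi 2 m _
    rw [h, map_add]
  map_smul' c f := by
    have h : (fun P : Fin m → ZMod 2 => eval P (c • f))
        = c • (fun P => eval P f) := funext fun P => MvPolynomial.smul_eval P f c
    show psi 2 m _ = (RingHom.id (ZMod 2)) c • psi 2 m _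
    rw [h, map_smul]
    rfl

lemma Efun_mem_HRMC {m d : ℕ} {f : MvPolynomial (Fin m) (ZMod 2)} (hf : f.IsHomogeneous d) :
    Efun m f ∈ Submodule.map (psi 2 m) (HRMC (ZMod 2) m d) :=
  Submodule.mem_map_of_mem (Submodule.subset_span ⟨f, hf, rfl⟩)

lemma eval_monomial_squarefree {m : ℕ} (a : Fin m →₀ ℕ) :
    (fun P : Fin m → ZMod 2 => eval P (monomial a (1 : ZMod 2)))
      = fun P => ∏ l ∈ a.support, P l := by
  funext P
  rw [eval_monomial, one_mul, Finsupp.prod]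
  exact Finset.prod_congr rfl fun l hl => zmod2_pow (P l) (Finsupp.mem_support_iff.mp hl)

lemma Efun_monomial {m : ℕ} (a : Fin m →₀ ℕ) (ha : a.support.Nonempty) :
    Efun m (monomial a 1)
      = ∑ T ∈ a.support.powerset.erase a.support, (yQ (T ∪ a.supportᶜ) + yQ Finset.univ) := by
  have : Efun m (monomial a 1) = psi 2 m (fun P => ∏ l ∈ a.support, P l) := by
    show psi 2 m _ = _
    rw [eval_monomial_squarefree]
  rw [this, psi_prod'' ha]

lemma fin2_cast_eq_zero : ∀ a : Fin 2, a ≠ 1 → (a : ℕ) = 0 := by decide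
lemma fin2_cast_ite : ∀ a : Fin 2, (a : ℕ) = if a = 1 then 1 else 0 := by decide

lemma family_eq_yQ {m : ℕ} (i : Fin m → Fin 2) :
    (∏ l, (xA 2 m l - 1) ^ ((i l : ℕ))) = yQ (Finset.univ.filter fun l => i l = 1) := by
  classical
  rw [yQ, ← Finset.prod_filter_mul_prod_filter_not Finset.univ (fun l => i l = 1)]
  have h2 : ∀ l ∈ Finset.univ.filter (fun l => ¬ i l = 1), (xA 2 m l - 1) ^ ((i l : ℕ)) = 1 := by
    intro l hl
    rw [Finset.mem_filter] at hl
    rw [fin2_cast_eq_zero _ hl.2, pow_zero]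
  rw [Finset.prod_congr rfl h2, Finset.prod_const_one, mul_one]
  refine Finset.prod_congr rfl fun l hl => ?_
  rw [Finset.mem_filter] at hl
  rw [hl.2]
  norm_num

lemma sum_eq_card_filter {m : ℕ} (i : Fin m → Fin 2) :
    ∑ l, (i l : ℕ) = (Finset.univ.filter fun l => i l = 1).card := by
  classical
  rw [Finset.card_filter]
  exact Finset.sum_congr rfl fun l _ => fin2_cast_ite (i l)

lemma yQ_univ {m : ℕ} : (∏ l, (xA 2 m l - 1)) = yQ (Finset.univ : Finset (Fin m)) := rfl

noncomputable def iOf {m : ℕ} (U : Finset (Fin m)) : Fin m → Fin 2 :=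
  fun l => if l ∈ U then 1 else 0

lemma filter_iOf {m : ℕ} (U : Finset (Fin m)) :
    (Finset.univ.filter fun l => iOf U l = 1) = U := by
  ext l
  simp only [Finset.mem_filter, Finset.mem_univ, true_and, iOf]
  by_cases h : l ∈ U
  · simp [h]
  · simp [h]

lemma yQ_add_mem_map {m d : ℕ} (hd1 : 1 ≤ d) (hd2 : d ≤ m) :
    ∀ n (U : Finset (Fin m)), m - d ≤ U.card → U.card < m → m - U.card ≤ n →
      yQ U + yQ Finset.univ ∈ Submodule.map (psi 2 m) (HRMC (ZMod 2) m d) := by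
  intro n
  induction n with
  | zero => intro U h1 h2 h3; omega
  | succ n ih =>
    intro U h1 h2 h3
    classical
    set S := Uᶜ with hS
    have hScard : S.card = m - U.card := by rw [hS, Finset.card_compl, Fintype.card_fin]
    have hUle : U.card ≤ m := by
      have := Finset.card_le_univ U
      rwa [Fintype.card_fin] at this
    have hSne : S.Nonempty := Finset.card_pos.mp (by omega)
    obtain ⟨l0, hl0⟩ := hSne
    have hSd : S.card ≤ d := by omega
    set aF : Fin m → ℕ := fun l => if l ∈ S then (if l = l0 then d - S.card + 1 else 1) else 0
      with haF
    set a : Fin m →₀ ℕ := Finsupp.equivFunOnFinite.symm aF with ha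
    have ha_apply : ∀ l, a l = aF l := fun l => rfl
    have ha_supp : a.support = S := by
      ext l
      rw [Finsupp.mem_support_iff, ha_apply, haF]
      by_cases h : l ∈ S
      · simp only [if_pos h]
        refine ⟨fun _ => h, fun _ => ?_⟩
        split <;> omega
      · simp [h]
    have ha_deg : a.degree = d := by
      show (∑ l ∈ a.support, a l) = d
      rw [ha_supp, ← Finset.add_sum_erase _ _ hl0]
      have hl0v : a l0 = d - S.card + 1 := by rw [ha_apply, haF]; simp [hl0]
      have hrest : ∀ l ∈ S.erase l0, a l = 1 := by
        intro l hl
        rw [Finset.mem_erase] at hl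
        rw [ha_apply]
        show (if l ∈ S then if l = l0 then d - S.card + 1 else 1 else 0) = 1
        rw [if_pos hl.2, if_neg hl.1]
      rw [hl0v, Finset.sum_congr rfl hrest, Finset.sum_const, smul_eq_mul, mul_one,
        Finset.card_erase_of_mem hl0]
      have : 1 ≤ S.card := Finset.card_pos.mpr ⟨l0, hl0⟩
      omega
    have hhom := isHomogeneous_monomial (1 : ZMod 2) ha_deg
    have hmem := Efun_mem_HRMC (m := m) (d := d) hhom
    have hane : a.support.Nonempty := by rw [ha_supp]; exact ⟨l0, hl0⟩
    rw [Efun_monomial a hane, ha_supp] at hmem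
    have hUc : Sᶜ = U := by rw [hS, compl_compl]
    rw [hUc] at hmem
    have hempty : (∅ : Finset (Fin m)) ∈ S.powerset.erase S :=
      Finset.mem_erase.mpr ⟨Ne.symm (Finset.nonempty_iff_ne_empty.mp ⟨l0, hl0⟩),
        Finset.mem_powerset.mpr (Finset.empty_subset S)⟩
    rw [← Finset.add_sum_erase _ _ hempty, Finset.empty_union] at hmem
    have hrest : (∑ T ∈ (S.powerset.erase S).erase ∅, (yQ (T ∪ U) + yQ Finset.univ))
        ∈ Submodule.map (psi 2 m) (HRMC (ZMod 2) m d) := by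
      apply Submodule.sum_mem
      intro T hT
      rw [Finset.mem_erase, Finset.mem_erase, Finset.mem_powerset] at hT
      obtain ⟨hTne, hTS, hTsub⟩ := hT
      have hdisj : Disjoint T U := Finset.disjoint_left.mpr fun x hx hxU => by
        have := hTsub hx
        rw [hS, Finset.mem_compl] at this
        exact this hxU
      have hcard : (T ∪ U).card = T.card + U.card := Finset.card_union_of_disjoint hdisj
      have hTlt : T.card < S.card :=
        Finset.card_lt_card (Finset.ssubset_iff_subset_ne.mpr ⟨hTsub, hTS⟩)
      have hTpos : 0 < T.card := Finset.card_pos.mpr (Finset.nonempty_iff_ne_empty.mpr hTne)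
      exact ih (T ∪ U) (by omega) (by omega) (by omega)
    have hfin : yQ U + yQ Finset.univ
        = (yQ U + yQ Finset.univ + ∑ T ∈ (S.powerset.erase S).erase ∅, (yQ (T ∪ U) + yQ Finset.univ))
          - ∑ T ∈ (S.powerset.erase S).erase ∅, (yQ (T ∪ U) + yQ Finset.univ) := by
      abel
    rw [hfin]
    exact Submodule.sub_mem _ hmem hrest

lemma yQ_mem_span {m d : ℕ} {U : Finset (Fin m)} (h1 : m - d ≤ U.card) (h2 : U.card < m) :
    yQ U + yQ Finset.univ ∈ Submodule.span (ZMod 2)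
      (Set.range (fun i : {i : Fin m → Fin 2 // m - d ≤ ∑ k, (i k : ℕ) ∧ ∑ k, (i k : ℕ) < m} =>
        (∏ l, (xA 2 m l - 1) ^ ((i.1 l : ℕ))) + ∏ l, (xA 2 m l - 1))) := by
  apply Submodule.subset_span
  refine ⟨⟨iOf U, ?_⟩, ?_⟩
  · rw [sum_eq_card_filter, filter_iOf]
    exact ⟨h1, h2⟩
  · show (∏ l, (xA 2 m l - 1) ^ ((iOf U l : ℕ))) + ∏ l, (xA 2 m l - 1) = _
    rw [family_eq_yQ, filter_iOf, yQ_univ]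

lemma map_le_span {m d : ℕ} (hd1 : 1 ≤ d) :
    Submodule.map (psi 2 m) (HRMC (ZMod 2) m d) ≤ Submodule.span (ZMod 2)
      (Set.range (fun i : {i : Fin m → Fin 2 // m - d ≤ ∑ k, (i k : ℕ) ∧ ∑ k, (i k : ℕ) < m} =>
        (∏ l, (xA 2 m l - 1) ^ ((i.1 l : ℕ))) + ∏ l, (xA 2 m l - 1))) := by
  classical
  rw [HRMC, Submodule.map_span]
  rw [Submodule.span_le]
  rintro _ ⟨v, ⟨f, hf, rfl⟩, rfl⟩
  show Efun m f ∈ _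
  have hEf : Efun m f = ∑ a ∈ f.support, Efun m (monomial a (coeff a f)) := by
    conv_lhs => rw [MvPolynomial.as_sum f]
    rw [map_sum]
  rw [hEf]
  apply Submodule.sum_mem
  intro a ha
  have hc : monomial a (coeff a f) = (coeff a f) • monomial a (1 : ZMod 2) := by
    rw [smul_monomial, smul_eq_mul, mul_one]
  rw [hc, map_smul]
  apply Submodule.smul_mem
  have hdeg : a.degree = d := by
    rw [Finsupp.degree_eq_weight_one]
    exact hf (MvPolynomial.mem_support_iff.mp ha)
  have hdeg' : (∑ l ∈ a.support, a l) = d := hdeg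
  have hSne : a.support.Nonempty := by
    rw [Finset.nonempty_iff_ne_empty]
    intro h
    rw [h, Finset.sum_empty] at hdeg'
    omega
  have hcard_le : a.support.card ≤ d := by
    rw [← hdeg', Finset.card_eq_sum_ones]
    exact Finset.sum_le_sum fun l hl => Nat.one_le_iff_ne_zero.mpr (Finsupp.mem_support_iff.mp hl)
  have hScard : a.support.card ≤ m := by
    have := Finset.card_le_univ a.support
    rwa [Fintype.card_fin] at this
  rw [Efun_monomial a hSne]
  apply Submodule.sum_mem
  intro T hT
  rw [Finset.mem_erase, Finset.mem_powerset] at hT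
  obtain ⟨hTS, hTsub⟩ := hT
  have hdisj : Disjoint T a.supportᶜ := Finset.disjoint_left.mpr fun x hx hxc => by
    rw [Finset.mem_compl] at hxc
    exact hxc (hTsub hx)
  have hcard : (T ∪ a.supportᶜ).card = T.card + a.supportᶜ.card :=
    Finset.card_union_of_disjoint hdisj
  have hcompl : a.supportᶜ.card = m - a.support.card := by
    rw [Finset.card_compl, Fintype.card_fin]
  have hTlt : T.card < a.support.card :=
    Finset.card_lt_card (Finset.ssubset_iff_subset_ne.mpr ⟨hTsub, hTS⟩)
  exact yQ_mem_span (by omega) (by omega)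

/-- the elements `(x_0-1)^{i_0} ⋯ (x_{m-1}-1)^{i_{m-1}} + 1̂` with
`m - d ≤ Σ i_k < m` form an `F_2`-basis of `ψ(HRMC_d(m,2))`, where
`1̂ = (x_0-1)⋯(x_{m-1}-1)` is the all-one word. -/
theorem hrmc_jennings_basis (m d : ℕ) (hm : 1 ≤ m) (hd1 : 1 ≤ d) (hd2 : d ≤ m) :
    LinearIndependent (ZMod 2)
      (fun i : {i : Fin m → Fin 2 // m - d ≤ ∑ k, (i k : ℕ) ∧ ∑ k, (i k : ℕ) < m} =>
        (∏ l, (xA 2 m l - 1) ^ ((i.1 l : ℕ))) + ∏ l, (xA 2 m l - 1))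
    ∧ Submodule.span (ZMod 2)
        (Set.range (fun i : {i : Fin m → Fin 2 // m - d ≤ ∑ k, (i k : ℕ) ∧ ∑ k, (i k : ℕ) < m} =>
          (∏ l, (xA 2 m l - 1) ^ ((i.1 l : ℕ))) + ∏ l, (xA 2 m l - 1)))
        = Submodule.map (psi 2 m) (HRMC (ZMod 2) m d) := by
  refine ⟨hrmc_indep m d, le_antisymm ?_ (map_le_span hd1)⟩
  rw [Submodule.span_le]
  rintro _ ⟨i, rfl⟩
  show (∏ l, (xA 2 m l - 1) ^ ((i.1 l : ℕ))) + ∏ l, (xA 2 m l - 1) ∈ _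
  rw [family_eq_yQ, yQ_univ]
  have h1 := i.2.1
  have h2 := i.2.2
  rw [sum_eq_card_filter] at h1 h2
  exact yQ_add_mem_map hd1 hd2 (m - (Finset.univ.filter fun l => i.1 l = 1).card) _ h1 h2 le_rfl
end

section
/- Let m ≥ 2 and let d be an integer with 1 ≤ d ≤ m−1. Suppose c = Σ_η τ(η)·(b(η) + 1̂) ∈ A, where the sum runs over all subsets η ⊆ {0, …, m−1} with m − d ≤ |η| < m and τ(η) ∈ F_2, and let f ∈ A satisfy w(f) ≤ 2^{m−d−1} − 1. Set v = c + f. Then for every subset κ ⊆ {0, …, m−1} with |κ| = m − d, writing κᶜ = {0, …, m−1} ∖ κ, one has v·b(κᶜ) = τ(κ)·1̂ + f·b(κᶜ), and moreover τ(κ) = 0 if and only if w(v·b(κᶜ)) < 2^{m−1}. -/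
open MvPolynomial

-- auxiliary development
namespace DecAux
variable (m : ℕ)

abbrev Gm (m : ℕ) := Multiplicative (Fin m → ZMod 2)
abbrev Rm (m : ℕ) := MonoidAlgebra (ZMod 2) (Gm m)

noncomputable def gl (l : Fin m) : Gm m := Multiplicative.ofAdd (Pi.single l 1)

lemma gl_sq (l : Fin m) : gl m l * gl m l = 1 := by
  unfold gl
  rw [← ofAdd_add]
  have : (Pi.single l 1 : Fin m → ZMod 2) + Pi.single l 1 = 0 := by
    ext l'; by_cases h : l' = l <;> simp [h] <;> decide
  rw [this]; rfl

lemma xA_sq (l : Fin m) : xA 2 m l ^ 2 = 1 := by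
  have hmem : (MvPolynomial.X l ^ 2 - 1 : MvPolynomial (Fin m) (ZMod 2)) ∈ Aideal 2 m :=
    Ideal.subset_span ⟨l, rfl⟩
  calc xA 2 m l ^ 2 = Ideal.Quotient.mk (Aideal 2 m) (MvPolynomial.X l ^ 2) := by
        rw [xA, map_pow]
    _ = Ideal.Quotient.mk (Aideal 2 m) 1 := Ideal.Quotient.eq.mpr (by simpa using hmem)
    _ = 1 := map_one _

lemma xA_pow_mod (l : Fin m) (n : ℕ) : xA 2 m l ^ n = xA 2 m l ^ (n % 2) := by
  conv_lhs => rw [← Nat.div_add_mod n 2]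
  rw [pow_add, pow_mul, xA_sq, one_pow, one_mul]


noncomputable def Phi0 : MvPolynomial (Fin m) (ZMod 2) →ₐ[ZMod 2] Rm m :=
  MvPolynomial.aeval fun l => MonoidAlgebra.of (ZMod 2) (Gm m) (gl m l)

lemma Phi0_ker : ∀ a ∈ Aideal 2 m, Phi0 m a = 0 := by
  intro a ha
  have hle : Aideal 2 m ≤ RingHom.ker (Phi0 m).toRingHom := by
    rw [Aideal, Ideal.span_le]
    rintro _ ⟨l, rfl⟩
    simp only [SetLike.mem_coe, RingHom.mem_ker, AlgHom.toRingHom_eq_coe,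
      RingHom.coe_coe, map_sub, map_pow, map_one]
    rw [Phi0, MvPolynomial.aeval_X, ← map_pow, pow_two, gl_sq, map_one, sub_self]
  exact hle ha

noncomputable def Phi : ModA 2 m →ₐ[ZMod 2] Rm m :=
  Ideal.Quotient.liftₐ (Aideal 2 m) (Phi0 m) (Phi0_ker m)

lemma Phi_xA (l : Fin m) : Phi m (xA 2 m l) = MonoidAlgebra.of (ZMod 2) (Gm m) (gl m l) := by
  rw [Phi, xA, Ideal.Quotient.liftₐ_apply]
  exact MvPolynomial.aeval_X _ l

noncomputable def chi0 : Gm m →* ModA 2 m where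
  toFun g := ∏ l, xA 2 m l ^ ((Multiplicative.toAdd g) l).val
  map_one' := by
    simp only [toAdd_one, Pi.zero_apply, ZMod.val_zero, pow_zero, Finset.prod_const_one]
  map_mul' a b := by
    have h : ∀ l : Fin m, xA 2 m l ^ ((Multiplicative.toAdd (a * b)) l).val
        = xA 2 m l ^ ((Multiplicative.toAdd a) l).val
          * xA 2 m l ^ ((Multiplicative.toAdd b) l).val := by
      intro l
      rw [← pow_add, toAdd_mul, Pi.add_apply, ZMod.val_add]
      exact (xA_pow_mod m l _).symm
    show (∏ l, xA 2 m l ^ ((Multiplicative.toAdd (a * b)) l).val)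
      = (∏ l, xA 2 m l ^ ((Multiplicative.toAdd a) l).val)
        * (∏ l, xA 2 m l ^ ((Multiplicative.toAdd b) l).val)
    rw [Finset.prod_congr rfl fun l _ => h l, Finset.prod_mul_distrib]

noncomputable def chi : Rm m →ₐ[ZMod 2] ModA 2 m :=
  MonoidAlgebra.lift (ZMod 2) (ModA 2 m) (Gm m) (chi0 m)

lemma chi0_gl (l : Fin m) : chi0 m (gl m l) = xA 2 m l := by
  show (∏ l', xA 2 m l' ^ ((Pi.single l 1 : Fin m → ZMod 2) l').val) = xA 2 m l
  rw [Finset.prod_eq_single l (fun l' _ h => by simp [Pi.single_eq_of_ne h])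
    (fun h => absurd (Finset.mem_univ l) h)]
  norm_num [Pi.single_eq_same]
  rw [show ((1:ZMod 2)).val = 1 from rfl, pow_one]

lemma prod_gl_eq (g : Gm m) : (∏ l, gl m l ^ ((Multiplicative.toAdd g) l).val) = g := by
  have h : ∀ l : Fin m, gl m l ^ ((Multiplicative.toAdd g) l).val
      = Multiplicative.ofAdd (Pi.single l (Multiplicative.toAdd g l) : Fin m → ZMod 2) := by
    intro l
    rw [gl, ← ofAdd_nsmul]
    congr 1
    rw [← Pi.single_smul]
    congr 1
    rw [nsmul_eq_mul, mul_one, ZMod.natCast_val, ZMod.cast_id]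
  simp_rw [h, ← ofAdd_sum]
  rw [Finset.univ_sum_single]
  exact ofAdd_toAdd g

lemma Phi_chi0 (g : Gm m) : Phi m (chi0 m g) = MonoidAlgebra.of (ZMod 2) (Gm m) g := by
  show Phi m (∏ l, xA 2 m l ^ ((Multiplicative.toAdd g) l).val) = _
  rw [map_prod]
  simp_rw [map_pow, Phi_xA, ← map_pow, ← map_prod]
  rw [prod_gl_eq]

lemma Phi_chi (r : Rm m) : Phi m (chi m r) = r := by
  have : (Phi m).comp (chi m) = AlgHom.id (ZMod 2) (Rm m) := by
    apply MonoidAlgebra.algHom_ext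
    intro g
    simp only [AlgHom.coe_comp, Function.comp_apply, AlgHom.coe_id, id_eq]
    rw [show (MonoidAlgebra.single g (1:ZMod 2)) = MonoidAlgebra.of (ZMod 2) (Gm m) g from rfl]
    rw [chi, MonoidAlgebra.lift_of, Phi_chi0]
    exact Subsingleton.elim _ _
  exact DFunLike.congr_fun this r

lemma chi_injective : Function.Injective (chi m) := by
  intro a b h
  have := congrArg (Phi m) h
  rwa [Phi_chi, Phi_chi] at this


noncomputable def Ef (u : (Fin m → ZMod 2) → ZMod 2) : Rm m :=
  MonoidAlgebra.ofCoeff (Finsupp.equivFunOnFinite.symm (fun g : Gm m => u (Multiplicative.toAdd g)))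

lemma Ef_apply (u : (Fin m → ZMod 2) → ZMod 2) (g : Gm m) :
    (Ef m u).coeff g = u (Multiplicative.toAdd g) := rfl

lemma Ef_eq_sum (u : (Fin m → ZMod 2) → ZMod 2) :
    Ef m u = ∑ g : Gm m, MonoidAlgebra.single g (u (Multiplicative.toAdd g)) := by
  ext g₀
  rw [Ef_apply, MonoidAlgebra.coeff_sum, Finsupp.finset_sum_apply]
  simp_rw [MonoidAlgebra.coeff_single, Finsupp.single_apply]
  rw [Finset.sum_ite_eq' Finset.univ g₀ (fun g => u (Multiplicative.toAdd g))]
  simp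

lemma chi_Ef (u : (Fin m → ZMod 2) → ZMod 2) : chi m (Ef m u) = psi 2 m u := by
  rw [Ef_eq_sum, map_sum]
  simp_rw [chi, MonoidAlgebra.lift_single]
  show (∑ g : Gm m, u (Multiplicative.toAdd g) • chi0 m g) = _
  show _ = ∑ j : Fin m → ZMod 2, u j • ∏ l, (xA 2 m l) ^ (j l).val
  refine Fintype.sum_equiv (Multiplicative.toAdd) _ _ fun g => rfl

lemma card_support_Ef (u : (Fin m → ZMod 2) → ZMod 2) :
    (Ef m u).coeff.support.card = hammingNorm u := by
  rw [hammingNorm]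
  refine Finset.card_bij (fun g _ => Multiplicative.toAdd g) ?_ ?_ ?_
  · intro g hg
    simp only [Finset.mem_filter, Finset.mem_univ, true_and]
    exact Finsupp.mem_support_iff.mp hg
  · intro a _ b _ h
    exact Multiplicative.toAdd.injective h
  · intro j hj
    refine ⟨Multiplicative.ofAdd j, ?_, rfl⟩
    rw [Finsupp.mem_support_iff, Ef_apply]
    simpa using hj

noncomputable def Bf (η : Finset (Fin m)) : Rm m :=
  ∏ l ∈ η, (MonoidAlgebra.of (ZMod 2) (Gm m) (gl m l) - 1)

lemma chi_Bf (η : Finset (Fin m)) : chi m (Bf m η) = bElt m η := by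
  rw [Bf, map_prod, bElt]
  refine Finset.prod_congr rfl fun l _ => ?_
  rw [map_sub, map_one, chi, MonoidAlgebra.lift_of, chi0_gl]

lemma Rm_neg_one : (-1 : Rm m) = 1 := by
  have h : (1 : Rm m) + 1 = 0 := by
    have := congrArg (algebraMap (ZMod 2) (Rm m)) (show (1 : ZMod 2) + 1 = 0 by decide)
    rwa [map_add, map_one, map_zero] at this
  exact neg_eq_of_add_eq_zero_left h

lemma Bf_eq_sum (η : Finset (Fin m)) :
    Bf m η = ∑ t ∈ η.powerset, MonoidAlgebra.of (ZMod 2) (Gm m) (∏ l ∈ t, gl m l) := by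
  rw [Bf]
  have h1 : ∀ l ∈ η, MonoidAlgebra.of (ZMod 2) (Gm m) (gl m l) - 1
      = MonoidAlgebra.of (ZMod 2) (Gm m) (gl m l) + 1 := by
    intro l _
    rw [sub_eq_add_neg, Rm_neg_one]
  rw [Finset.prod_congr rfl h1, Finset.prod_add]
  refine Finset.sum_congr rfl fun t _ => ?_
  rw [Finset.prod_const_one, mul_one, map_prod]


lemma prod_gl_indicator (t : Finset (Fin m)) :
    (∏ l ∈ t, gl m l)
      = Multiplicative.ofAdd (fun l' => if l' ∈ t then (1 : ZMod 2) else 0) := by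
  simp_rw [gl, ← ofAdd_sum]
  congr 1
  ext l'
  rw [Finset.sum_apply]
  simpa using Finset.sum_pi_single' l' (1 : ZMod 2) t

lemma zmod2_cases (a : ZMod 2) : a = 0 ∨ a = 1 := by revert a; decide

lemma Bf_univ_eq : Bf m Finset.univ = ∑ g : Gm m, MonoidAlgebra.of (ZMod 2) (Gm m) g := by
  rw [Bf_eq_sum]
  refine Finset.sum_bij'
    (fun t _ => (Multiplicative.ofAdd (fun l' => if l' ∈ t then (1 : ZMod 2) else 0) : Gm m))
    (fun g _ => Finset.univ.filter (fun l => Multiplicative.toAdd g l = 1))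
    (fun t ht => Finset.mem_univ _) (fun g hg => Finset.mem_powerset.mpr (Finset.subset_univ _))
    ?_ ?_ ?_
  · intro t ht
    ext l
    simp only [Finset.mem_filter, Finset.mem_univ, true_and, toAdd_ofAdd]
    by_cases h : l ∈ t <;> simp [h] <;> decide
  · intro g hg
    apply Multiplicative.toAdd.injective
    ext l
    simp only [toAdd_ofAdd, Finset.mem_filter, Finset.mem_univ, true_and]
    rcases zmod2_cases (Multiplicative.toAdd g l) with h | h <;> simp [h] <;> decide
  · intro t ht
    rw [prod_gl_indicator]

lemma Bf_univ_apply (g₀ : Gm m) : (Bf m Finset.univ).coeff g₀ = 1 := by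
  rw [Bf_univ_eq]
  rw [MonoidAlgebra.coeff_sum, Finsupp.finset_sum_apply]
  have : ∀ g : Gm m, (MonoidAlgebra.of (ZMod 2) (Gm m) g).coeff g₀
      = if g = g₀ then (1 : ZMod 2) else 0 := by
    intro g
    exact Finsupp.single_apply
  rw [Finset.sum_congr rfl fun g _ => this g,
    Finset.sum_ite_eq' Finset.univ g₀ (fun _ => (1 : ZMod 2))]
  simp

lemma card_support_mul_of (a : Rm m) (g : Gm m) :
    (a * MonoidAlgebra.of (ZMod 2) (Gm m) g).coeff.support.card = a.coeff.support.card := by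
  have := MonoidAlgebra.support_mul_single a (1 : ZMod 2) (fun y => by simp) g
  rw [show MonoidAlgebra.of (ZMod 2) (Gm m) g = MonoidAlgebra.single g 1 from rfl, this,
    Finset.card_map]

lemma card_support_sum {ι : Type*} (s : Finset ι) (F : ι → Rm m) :
    (∑ t ∈ s, F t).coeff.support.card ≤ ∑ t ∈ s, (F t).coeff.support.card := by
  classical
  induction s using Finset.induction_on with
  | empty => simp
  | @insert a s ha ih =>
    rw [Finset.sum_insert ha, Finset.sum_insert ha]
    calc (F a + ∑ t ∈ s, F t).coeff.support.card
        ≤ ((F a).coeff.support ∪ (∑ t ∈ s, F t).coeff.support).card :=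
          Finset.card_le_card Finsupp.support_add
      _ ≤ (F a).coeff.support.card + (∑ t ∈ s, F t).coeff.support.card := Finset.card_union_le _ _
      _ ≤ (F a).coeff.support.card + ∑ t ∈ s, (F t).coeff.support.card := Nat.add_le_add_left ih _
  
lemma card_support_mul_Bf (a : Rm m) (η : Finset (Fin m)) :
    (a * Bf m η).coeff.support.card ≤ 2 ^ η.card * a.coeff.support.card := by
  rw [Bf_eq_sum, Finset.mul_sum]
  refine le_trans (card_support_sum m _ _) ?_
  have : ∀ t ∈ η.powerset,
      (a * MonoidAlgebra.of (ZMod 2) (Gm m) (∏ l ∈ t, gl m l)).coeff.support.card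
        = a.coeff.support.card := fun t _ => card_support_mul_of m a _
  rw [Finset.sum_congr rfl this, Finset.sum_const, Finset.card_powerset, smul_eq_mul]

lemma card_Gm : Fintype.card (Gm m) = 2 ^ m := by
  rw [Fintype.card_congr Multiplicative.toAdd]
  simp [Fintype.card_fun]

lemma card_support_one_add (z : Rm m) :
    2 ^ m - z.coeff.support.card ≤ (Bf m Finset.univ + z).coeff.support.card := by
  classical
  have hsub : z.coeff.supportᶜ ⊆ (Bf m Finset.univ + z).coeff.support := by
    intro g hg
    rw [Finset.mem_compl, Finsupp.notMem_support_iff] at hg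
    rw [Finsupp.mem_support_iff, MonoidAlgebra.coeff_add, Finsupp.add_apply, Bf_univ_apply, hg, add_zero]
    decide
  refine le_trans ?_ (Finset.card_le_card hsub)
  rw [Finset.card_compl, card_Gm]


lemma xsub_sq (l : Fin m) : (xA 2 m l - 1) ^ 2 = 0 := by
  have h11 : (1 : ModA 2 m) + 1 = 0 := by
    have := congrArg (algebraMap (ZMod 2) (ModA 2 m)) (show (1 : ZMod 2) + 1 = 0 by decide)
    rwa [map_add, map_one, map_zero] at this
  have h2 : (2 : ModA 2 m) = 0 := by
    rw [show (2 : ModA 2 m) = 1 + 1 by norm_num, h11]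
  have : (xA 2 m l - 1) ^ 2 = xA 2 m l ^ 2 - 2 * xA 2 m l + 1 := by ring
  rw [this, xA_sq, h2, zero_mul, sub_zero, h11]

lemma bElt_mul_zero (η ζ : Finset (Fin m)) (l : Fin m) (h1 : l ∈ η) (h2 : l ∈ ζ) :
    bElt m η * bElt m ζ = 0 := by
  rw [bElt, bElt, ← Finset.mul_prod_erase _ _ h1, ← Finset.mul_prod_erase _ _ h2]
  have : (xA 2 m l - 1) * (∏ l' ∈ η.erase l, (xA 2 m l' - 1))
      * ((xA 2 m l - 1) * ∏ l' ∈ ζ.erase l, (xA 2 m l' - 1))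
      = (xA 2 m l - 1) ^ 2 * ((∏ l' ∈ η.erase l, (xA 2 m l' - 1))
        * ∏ l' ∈ ζ.erase l, (xA 2 m l' - 1)) := by ring
  rw [this, xsub_sq, zero_mul]

lemma bElt_mul_compl (κ : Finset (Fin m)) : bElt m κ * bElt m κᶜ = bElt m Finset.univ := by
  rw [bElt, bElt, bElt]
  exact Finset.prod_mul_prod_compl κ _

end DecAux

/-- decoding step for binary homogeneous Reed–Muller codes: with
`c = Σ_{m-d ≤ |η| < m} τ(η)(b(η) + 1̂)`, `w(f) ≤ 2^{m-d-1} - 1` and `v = c + f`,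
for every `κ` with `|κ| = m - d` one has `v·b(κᶜ) = τ(κ)·1̂ + f·b(κᶜ)`, and
`τ(κ) = 0` iff `w(v·b(κᶜ)) < 2^{m-1}` (weights measured via the coefficient vectors
under `ψ`). -/
theorem decoding_step (m d : ℕ) (hm : 2 ≤ m) (hd1 : 1 ≤ d) (hd2 : d ≤ m - 1)
    (τ : Finset (Fin m) → ZMod 2) (c f v : ModA 2 m)
    (hc : c = ∑ η ∈ Finset.univ.filter
        (fun η : Finset (Fin m) => m - d ≤ η.card ∧ η.card < m),
      τ η • (bElt m η + bElt m Finset.univ))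
    (cf : (Fin m → ZMod 2) → ZMod 2) (hcf : psi 2 m cf = f)
    (hwf : hammingNorm cf ≤ 2 ^ (m - d - 1) - 1)
    (hv : v = c + f) :
    ∀ κ : Finset (Fin m), κ.card = m - d →
      v * bElt m κᶜ = τ κ • bElt m Finset.univ + f * bElt m κᶜ ∧
      (τ κ = 0 ↔ ∀ cv : (Fin m → ZMod 2) → ZMod 2,
          psi 2 m cv = v * bElt m κᶜ → hammingNorm cv < 2 ^ (m - 1)) := by
  classical
  intro κ hκ
  have hdm : d ≤ m - 1 := hd2
  have hκc : κᶜ.card = d := by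
    rw [Finset.card_compl, hκ, Fintype.card_fin]; omega
  have hκmem : κ ∈ Finset.univ.filter
      (fun η : Finset (Fin m) => m - d ≤ η.card ∧ η.card < m) := by
    rw [Finset.mem_filter]
    exact ⟨Finset.mem_univ _, by omega, by omega⟩
  have hκcne : ∃ l, l ∈ κᶜ := by
    have : 0 < κᶜ.card := by omega
    obtain ⟨l, hl⟩ := Finset.card_pos.mp this
    exact ⟨l, hl⟩
  obtain ⟨l₀, hl₀⟩ := hκcne
  have hbuniv : bElt m Finset.univ * bElt m κᶜ = 0 :=
    DecAux.bElt_mul_zero m _ _ l₀ (Finset.mem_univ l₀) hl₀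
  have hA : c * bElt m κᶜ = τ κ • bElt m Finset.univ := by
    rw [hc, Finset.sum_mul]
    rw [Finset.sum_eq_single_of_mem κ hκmem ?_]
    · rw [smul_mul_assoc, add_mul, DecAux.bElt_mul_compl, hbuniv, add_zero]
    · intro η hη hne
      rw [Finset.mem_filter] at hη
      have hsub : ¬ η ⊆ κ := by
        intro hs
        exact hne (Finset.eq_of_subset_of_card_le hs (by omega))
      obtain ⟨l, hlη, hlκ⟩ := Finset.not_subset.mp hsub
      rw [smul_mul_assoc, add_mul,
        DecAux.bElt_mul_zero m _ _ l hlη (Finset.mem_compl.mpr hlκ),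
        DecAux.bElt_mul_zero m _ _ l (Finset.mem_univ l) (Finset.mem_compl.mpr hlκ),
        add_zero, smul_zero]
  have h1 : v * bElt m κᶜ = τ κ • bElt m Finset.univ + f * bElt m κᶜ := by
    rw [hv, add_mul, hA]
  refine ⟨h1, ?_⟩
  set z := DecAux.Ef m cf * DecAux.Bf m κᶜ with hzdef
  have hfb : f * bElt m κᶜ = DecAux.chi m z := by
    rw [hzdef, map_mul, DecAux.chi_Ef, DecAux.chi_Bf, hcf]
  have hzcard : z.coeff.support.card < 2 ^ (m - 1) := by
    have hb := DecAux.card_support_mul_Bf m (DecAux.Ef m cf) κᶜ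
    rw [hκc, DecAux.card_support_Ef, ← hzdef] at hb
    have h2 : 2 ^ d * hammingNorm cf ≤ 2 ^ d * (2 ^ (m - d - 1) - 1) :=
      Nat.mul_le_mul_left _ hwf
    have h3 : 2 ^ d * (2 ^ (m - d - 1) - 1) < 2 ^ d * 2 ^ (m - d - 1) :=
      Nat.mul_lt_mul_of_pos_left (Nat.sub_lt (by positivity) one_pos) (by positivity)
    have h4 : 2 ^ d * 2 ^ (m - d - 1) = 2 ^ (m - 1) := by
      rw [← pow_add]; congr 1; omega
    omega
  constructor
  · intro hτ0 cv hcv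
    rw [h1, hτ0, zero_smul, zero_add, hfb, ← DecAux.chi_Ef] at hcv
    have hEq := DecAux.chi_injective m hcv
    rw [← DecAux.card_support_Ef, hEq]
    exact hzcard
  · intro hall
    by_contra hτ
    have hτ1 : τ κ = 1 := by
      rcases DecAux.zmod2_cases (τ κ) with h | h
      · exact absurd h hτ
      · exact h
    set w := DecAux.Bf m Finset.univ + z with hw
    have hvb : v * bElt m κᶜ = DecAux.chi m w := by
      rw [h1, hτ1, one_smul, hfb, hw, map_add, DecAux.chi_Bf]
    set cv : (Fin m → ZMod 2) → ZMod 2 :=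
      fun j => w.coeff (Multiplicative.ofAdd j) with hcvdef
    have hEf : DecAux.Ef m cv = w := by
      ext g
      rw [DecAux.Ef_apply]
      rfl
    have hpsi : psi 2 m cv = v * bElt m κᶜ := by
      rw [← DecAux.chi_Ef, hEf, hvb]
    have hlt := hall cv hpsi
    have hge : 2 ^ m - z.coeff.support.card ≤ hammingNorm cv := by
      rw [← DecAux.card_support_Ef, hEf, hw]
      exact DecAux.card_support_one_add m z
    have h2m : 2 ^ m = 2 * 2 ^ (m - 1) := by
      rw [← pow_succ']; congr 1; omega
    omega
end

section
/- Let m = 5 and A = F_2[X_0, …, X_4]/(X_0^2 − 1, …, X_4^2 − 1). For l ∈ {0, …, 4} set Ẽ_l = ∏_{k ≠ l} (x_k − 1). Let c = Σ_{i=0}^{4} τ_i·(Ẽ_i + 1̂) with τ_i ∈ F_2, let f ∈ A satisfy w(f) ≤ 7, and set v = c + f. Then for every j ∈ {0, …, 4}: τ_j = 0 if and only if w(v·(x_j − 1)) < 16. -/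
open MvPolynomial

-- basic lemmas
lemma xsq (m : ℕ) (l : Fin m) : (xA 2 m l) ^ 2 = 1 := by
  have h : Ideal.Quotient.mk (Aideal 2 m) ((MvPolynomial.X l)^2)
      = Ideal.Quotient.mk (Aideal 2 m) 1 :=
    Ideal.Quotient.eq.2 (Ideal.subset_span ⟨l, rfl⟩)
  rw [xA, ← map_pow, ← map_one (Ideal.Quotient.mk (Aideal 2 m))]
  exact h

lemma two_eq_zero (m : ℕ) : (2 : ModA 2 m) = 0 := by
  have h : (2 : MvPolynomial (Fin m) (ZMod 2)) = 0 := by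
    have : ((2:ℕ) : MvPolynomial (Fin m) (ZMod 2)) = 0 := CharP.cast_eq_zero _ 2
    simpa using this
  calc (2 : ModA 2 m) = Ideal.Quotient.mk (Aideal 2 m) 2 := (map_ofNat _ 2).symm
    _ = 0 := by rw [h, map_zero]

lemma neg_one_eq (m : ℕ) : (-1 : ModA 2 m) = 1 := by
  have h : (1 : ModA 2 m) + 1 = 0 := by
    have := two_eq_zero m; linear_combination this
  exact neg_eq_of_add_eq_zero_left h

lemma sub_one_eq (m : ℕ) (a : ModA 2 m) : a - 1 = a + 1 := by
  rw [sub_eq_add_neg, neg_one_eq]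

noncomputable def M (m : ℕ) (k : Fin m → ZMod 2) : ModA 2 m := ∏ l, (xA 2 m l) ^ (k l).val

lemma xpow_add (m : ℕ) (l : Fin m) (z w : ZMod 2) :
    (xA 2 m l) ^ z.val * (xA 2 m l) ^ w.val = (xA 2 m l) ^ (z + w).val := by
  have h := xsq m l
  have hall : ∀ u : ZMod 2, u = 0 ∨ u = 1 := by decide
  have e0 : (0 : ZMod 2).val = 0 := rfl
  have e1 : (1 : ZMod 2).val = 1 := rfl
  rcases hall z with rfl | rfl <;> rcases hall w with rfl | rfl
  · rw [show ((0:ZMod 2)+0) = 0 by decide, e0, pow_zero, mul_one]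
  · rw [zero_add, e0, pow_zero, one_mul]
  · rw [add_zero, e0, pow_zero, mul_one]
  · rw [e1, pow_one, show ((1:ZMod 2)+1) = 0 by decide, e0, pow_zero, ← h]; ring

lemma M_add (m : ℕ) (a b : Fin m → ZMod 2) : M m a * M m b = M m (a + b) := by
  rw [M, M, M, ← Finset.prod_mul_distrib]
  exact Finset.prod_congr rfl fun l _ => xpow_add m l (a l) (b l)

-- psi in terms of M
lemma psi_apply_s16 (m : ℕ) (cv : (Fin m → ZMod 2) → ZMod 2) :
    psi 2 m cv = ∑ k : Fin m → ZMod 2, cv k • M m k := rfl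

lemma eps_add_self (m : ℕ) (e : Fin m → ZMod 2) : e + e = 0 := by
  funext l
  have : ∀ u : ZMod 2, u + u = 0 := by decide
  exact this (e l)

lemma psi_mul_M (m : ℕ) (cv : (Fin m → ZMod 2) → ZMod 2) (e : Fin m → ZMod 2) :
    psi 2 m cv * M m e = psi 2 m (fun k => cv (k + e)) := by
  rw [psi_apply_s16, psi_apply_s16, Finset.sum_mul]
  refine Fintype.sum_equiv (Equiv.addRight e) _ _ (fun k => ?_)
  simp only [Equiv.coe_addRight, smul_mul_assoc, M_add]
  congr 1
  rw [add_assoc, eps_add_self, add_zero]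

lemma M_single (m : ℕ) (j : Fin m) : M m (Pi.single j 1) = xA 2 m j := by
  rw [M]
  rw [Finset.prod_eq_single j]
  · rw [Pi.single_eq_same, show (1 : ZMod 2).val = 1 from rfl, pow_one]
  · intro l _ hl
    simp [Pi.single_apply, hl]
  · simp

lemma psi_mul_x (m : ℕ) (cv : (Fin m → ZMod 2) → ZMod 2) (j : Fin m) :
    psi 2 m cv * xA 2 m j = psi 2 m (fun k => cv (k + Pi.single j 1)) := by
  rw [← M_single, psi_mul_M]

lemma x_sub_one_sq (m : ℕ) (j : Fin m) : (xA 2 m j - 1) * (xA 2 m j - 1) = 0 := by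
  linear_combination (xsq m j) + (1 - xA 2 m j) * (two_eq_zero m)

lemma bElt_mul_zero (m : ℕ) (s : Finset (Fin m)) (j : Fin m) (hj : j ∈ s) :
    bElt m s * (xA 2 m j - 1) = 0 := by
  rw [bElt, ← Finset.mul_prod_erase s _ hj, mul_comm (xA 2 m j - 1), mul_assoc,
    x_sub_one_sq, mul_zero]

lemma bElt_compl_mul (m : ℕ) (j : Fin m) :
    bElt m ({j}ᶜ) * (xA 2 m j - 1) = bElt m Finset.univ := by
  rw [bElt, bElt, mul_comm, ← Finset.mul_prod_erase Finset.univ _ (Finset.mem_univ j)]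
  congr 1
  rw [Finset.compl_singleton]

lemma one_hat (m : ℕ) : bElt m Finset.univ = psi 2 m (fun _ => 1) := by
  have h1 : ∀ l : Fin m, xA 2 m l - 1 = ∑ z : ZMod 2, (xA 2 m l) ^ z.val := by
    intro l
    rw [sub_one_eq]
    rw [show (Finset.univ : Finset (ZMod 2)) = {0, 1} by decide]
    rw [Finset.sum_insert (by decide), Finset.sum_singleton]
    rw [show (0 : ZMod 2).val = 0 from rfl, show (1 : ZMod 2).val = 1 from rfl,
      pow_zero, pow_one, add_comm]
  rw [bElt]
  rw [Finset.prod_congr rfl (fun l _ => h1 l), Finset.prod_univ_sum]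
  rw [psi_apply_s16]
  refine Fintype.sum_equiv (Equiv.refl _) _ _ (fun k => ?_)
  simp only [Equiv.refl_apply, one_smul, M]

-- The inverse direction: Phi : ModA 2 m →ₐ AddMonoidAlgebra
noncomputable def Phi0 (m : ℕ) :
    MvPolynomial (Fin m) (ZMod 2) →ₐ[ZMod 2] AddMonoidAlgebra (ZMod 2) (Fin m → ZMod 2) :=
  MvPolynomial.aeval (fun l : Fin m => AddMonoidAlgebra.single (Pi.single l 1) 1)

lemma Phi0_ker (m : ℕ) : ∀ a ∈ Aideal 2 m, Phi0 m a = 0 := by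
  intro a ha
  have hle : Aideal 2 m ≤ RingHom.ker (Phi0 m).toRingHom := by
    rw [Aideal, Ideal.span_le]
    rintro _ ⟨l, rfl⟩
    have h : Phi0 m ((MvPolynomial.X l) ^ 2 - 1) = 0 := by
      rw [map_sub, map_pow, map_one, Phi0, MvPolynomial.aeval_X, sq,
        AddMonoidAlgebra.single_mul_single, eps_add_self, mul_one,
        ← AddMonoidAlgebra.one_def, sub_self]
    simpa [RingHom.mem_ker] using h
  exact hle ha

noncomputable def Phi (m : ℕ) :
    ModA 2 m →ₐ[ZMod 2] AddMonoidAlgebra (ZMod 2) (Fin m → ZMod 2) :=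
  Ideal.Quotient.liftₐ (Aideal 2 m) (Phi0 m) (Phi0_ker m)

lemma Phi_x (m : ℕ) (l : Fin m) :
    Phi m (xA 2 m l) = AddMonoidAlgebra.single (Pi.single l 1) 1 := by
  rw [Phi, xA, Ideal.Quotient.liftₐ_apply]
  exact MvPolynomial.aeval_X _ l

lemma valcast : ∀ z : ZMod 2, ((z.val : ℕ) : ZMod 2) = z := by decide

lemma Phi_M (m : ℕ) (k : Fin m → ZMod 2) :
    Phi m (M m k) = AddMonoidAlgebra.single k 1 := by
  rw [M, map_prod]
  have hfac : ∀ l : Fin m, Phi m (xA 2 m l ^ (k l).val)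
      = AddMonoidAlgebra.single ((k l).val • Pi.single l (1 : ZMod 2)) 1 := by
    intro l
    rw [map_pow, Phi_x, AddMonoidAlgebra.single_pow, one_pow]
  rw [Finset.prod_congr rfl (fun l _ => hfac l)]
  rw [AddMonoidAlgebra.prod_single]
  rw [Finset.prod_const_one]
  congr 1
  funext i
  rw [Finset.sum_apply]
  rw [Finset.sum_eq_single i]
  · rw [Pi.smul_apply, Pi.single_eq_same, nsmul_eq_mul, mul_one]
    exact valcast _
  · intro l _ hl
    rw [Pi.smul_apply, Pi.single_eq_of_ne (Ne.symm hl), smul_zero]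
  · simp

lemma Phi_psi (m : ℕ) (cv : (Fin m → ZMod 2) → ZMod 2) (k : Fin m → ZMod 2) :
    (Phi m (psi 2 m cv)).coeff k = cv k := by
  rw [psi_apply_s16, map_sum]
  have : ∀ k' : Fin m → ZMod 2, Phi m (cv k' • M m k')
      = AddMonoidAlgebra.single k' (cv k') := by
    intro k'
    rw [map_smul, Phi_M, AddMonoidAlgebra.smul_single', mul_one]
  rw [Finset.sum_congr rfl (fun k' _ => this k')]
  rw [AddMonoidAlgebra.coeff_sum, Finset.sum_apply']
  simp only [AddMonoidAlgebra.coeff_single]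
  rw [Finset.sum_eq_single k]
  · exact Finsupp.single_eq_same
  · intro l _ hl
    exact Finsupp.single_eq_of_ne' hl
  · simp

lemma psi_inj (m : ℕ) : Function.Injective (psi 2 m) := by
  intro a b hab
  funext k
  rw [← Phi_psi m a k, ← Phi_psi m b k, hab]

-- norm lemmas
lemma norm_shift (m : ℕ) (cf : (Fin m → ZMod 2) → ZMod 2) (e : Fin m → ZMod 2) :
    hammingNorm (fun k => cf (k + e)) = hammingNorm cf := by
  unfold hammingNorm
  refine Finset.card_bij' (fun a _ => a + e) (fun a _ => a + e) ?_ ?_ ?_ ?_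
  · intro a ha
    simpa using (Finset.mem_filter.1 ha).2
  · intro a ha
    simp only [Finset.mem_filter, Finset.mem_univ, true_and]
    rw [add_assoc, eps_add_self, add_zero]
    simpa using (Finset.mem_filter.1 ha).2
  · intro a _
    show a + e + e = a
    rw [add_assoc, eps_add_self, add_zero]
  · intro a _
    show a + e + e = a
    rw [add_assoc, eps_add_self, add_zero]

lemma hnorm_add_le {ι : Type*} [Fintype ι] (a b : ι → ZMod 2) :
    hammingNorm (a + b) ≤ hammingNorm a + hammingNorm b := by
  calc hammingNorm (a + b) = hammingDist (a + b) 0 := (hammingDist_zero_right _).symm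
    _ ≤ hammingDist (a + b) b + hammingDist b 0 := hammingDist_triangle _ _ _
    _ = hammingNorm a + hammingNorm b := by
        rw [hammingDist_zero_right, hammingDist_eq_hammingNorm, show -(a + b) + b = a by
          funext i; simp only [Pi.add_apply, Pi.neg_apply]
          generalize a i = x; generalize b i = y; revert x y; decide]

lemma norm_cover {ι : Type*} [Fintype ι] (a b : ι → ZMod 2)
    (h : ∀ i, a i = 0 → b i ≠ 0) :
    Fintype.card ι ≤ hammingNorm b + hammingNorm a := by
  classical
  unfold hammingNorm
  have hsub : (Finset.univ : Finset ι) ⊆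
      Finset.filter (fun i => b i ≠ 0) Finset.univ ∪
        Finset.filter (fun i => a i ≠ 0) Finset.univ := by
    intro i _
    rw [Finset.mem_union, Finset.mem_filter, Finset.mem_filter]
    by_cases ha : a i = 0
    · exact Or.inl ⟨Finset.mem_univ _, h i ha⟩
    · exact Or.inr ⟨Finset.mem_univ _, ha⟩
  calc Fintype.card ι = (Finset.univ : Finset ι).card := rfl
    _ ≤ _ := Finset.card_le_card hsub
    _ ≤ _ := Finset.card_union_le _ _

lemma card32 : Fintype.card (Fin 5 → ZMod 2) = 32 := by
  rw [Fintype.card_fun]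
  rfl


/-- decoding `HRMC_1(5,2)`: with `Ẽ_l = ∏_{k ≠ l}(x_k - 1) = b({l}ᶜ)`,
`c = Σ_i τ_i (Ẽ_i + 1̂)`, `w(f) ≤ 7` and `v = c + f`, for every `j` one has
`τ_j = 0` iff `w(v·(x_j - 1)) < 16` (weights measured via coefficient vectors under `ψ`). -/
theorem decoding_example (τ : Fin 5 → ZMod 2) (c f v : ModA 2 5)
    (hc : c = ∑ i : Fin 5, τ i • (bElt 5 ({i}ᶜ) + bElt 5 Finset.univ))
    (cf : (Fin 5 → ZMod 2) → ZMod 2) (hcf : psi 2 5 cf = f)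
    (hwf : hammingNorm cf ≤ 7)
    (hv : v = c + f) :
    ∀ j : Fin 5,
      (τ j = 0 ↔ ∀ cv : (Fin 5 → ZMod 2) → ZMod 2,
        psi 2 5 cv = v * (xA 2 5 j - 1) → hammingNorm cv < 16) := by
  intro j
  set e : Fin 5 → ZMod 2 := Pi.single j 1 with he
  set shift : (Fin 5 → ZMod 2) → ZMod 2 := fun k => cf (k + e) with hshift
  -- Step 1 : c * (x_j - 1) = τ j • bElt univ
  have hcmul : c * (xA 2 5 j - 1) = τ j • bElt 5 Finset.univ := by
    rw [hc, Finset.sum_mul]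
    rw [Finset.sum_eq_single j]
    · rw [smul_mul_assoc, add_mul, bElt_compl_mul,
        bElt_mul_zero 5 Finset.univ j (Finset.mem_univ j), add_zero]
    · intro i _ hij
      rw [smul_mul_assoc, add_mul,
        bElt_mul_zero 5 ({i}ᶜ) j (by simpa [Finset.mem_compl] using (Ne.symm hij)),
        bElt_mul_zero 5 Finset.univ j (Finset.mem_univ j), add_zero, smul_zero]
    · intro h; exact absurd (Finset.mem_univ j) h
  -- Step 2 : f * (x_j - 1) = psi (shift + cf)
  have hfmul : f * (xA 2 5 j - 1) = psi 2 5 (shift + cf) := by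
    rw [← hcf, sub_one_eq, mul_add, mul_one, psi_mul_x, map_add]
  -- Step 3 : v * (x_j - 1) = psi W
  set W : (Fin 5 → ZMod 2) → ZMod 2 := (fun _ => τ j) + (shift + cf) with hW
  have hsmul1 : τ j • psi 2 5 (fun _ => 1) = psi 2 5 (fun _ => τ j) := by
    rw [← map_smul]
    congr 1
    funext k
    show τ j • (1 : ZMod 2) = τ j
    rw [smul_eq_mul, mul_one]
  have hvmul : psi 2 5 W = v * (xA 2 5 j - 1) := by
    rw [hv, add_mul, hcmul, hfmul, one_hat, hsmul1, hW, map_add]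
  -- Step 4 : weight bound on the error part
  have hsc : hammingNorm (shift + cf) ≤ 14 := by
    have h1 := hnorm_add_le shift cf
    have h2 : hammingNorm shift = hammingNorm cf := norm_shift 5 cf e
    omega
  constructor
  · intro h0 cv hcv
    have hcvW : cv = W := psi_inj 5 (hcv.trans hvmul.symm)
    have hWs : W = shift + cf := by
      funext k
      show τ j + (shift + cf) k = (shift + cf) k
      rw [h0, zero_add]
    rw [hcvW, hWs]
    omega
  · intro hall
    by_contra hτ
    have hτ1 : τ j = 1 := by
      have : ∀ u : ZMod 2, u ≠ 0 → u = 1 := by decide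
      exact this _ hτ
    have hlt := hall W hvmul
    have hcov := norm_cover (shift + cf) W (by
      intro i hi
      show τ j + (shift + cf) i ≠ 0
      rw [hτ1, hi, add_zero]
      decide)
    rw [card32] at hcov
    omega
end
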